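/- arXiv:2209.06765 — 5 statements merged into one kernel-verified Lean document; each statement's English description precedes it below -/
import Mathlib

section
/- Let d ≥ 2 and let G=(V,E) be a connected, acyclic, d-regular simple graph (the infinite d-regular tree). Then for every finite nonempty subset A ⊆ V, the edge boundary satisfies #∂_E(A) ≥ (d−2)·#A + 2. -/
open Real

/-- The edge boundary of a set `A`: the edges of `G` with exactly one endpoint in `A`. -/
def edgeBoundary {V : Type*} (G : SimpleGraph V) (A : Set V) : Set (Sym2 V) :=
  {e | e ∈ G.edgeSet ∧ ∃ u w : V, e = s(u, w) ∧ u ∈ A ∧ w ∉ A}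

/-- The vertex boundary of `A`: vertices outside `A` adjacent to some vertex of `A`. -/
def vertexBoundary {V : Type*} (G : SimpleGraph V) (A : Set V) : Set V :=
  {u | u ∉ A ∧ ∃ w ∈ A, G.Adj u w}

/-- The vertex-isoperimetric profile `∂_V(N)`. -/
noncomputable def vertexProfile {V : Type*} (G : SimpleGraph V) (N : ℕ) : ℕ :=
  sInf {k : ℕ | ∃ A : Set V, A.Finite ∧ A.ncard = N ∧ (vertexBoundary G A).ncard = k}

/-- `‖∇f‖_{L¹} = ∑_{{u,w} ∈ E} |f u - f w|`. -/
noncomputable def gradL1 {V : Type*} (G : SimpleGraph V) (f : V → ℝ) : ℝ :=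
  ∑' e : G.edgeSet,
    Sym2.lift ⟨fun u w => |f u - f w|, fun u w => by dsimp only; rw [abs_sub_comm]⟩ e.1

/-- `‖∇f‖_{L^∞} = sup_{{u,w} ∈ E} |f u - f w|`. -/
noncomputable def gradLinf {V : Type*} (G : SimpleGraph V) (f : V → ℝ) : ℝ :=
  ⨆ e : G.edgeSet,
    Sym2.lift ⟨fun u w => |f u - f w|, fun u w => by dsimp only; rw [abs_sub_comm]⟩ e.1

/-- `‖∇f‖_{L^p} = (∑_{{u,w} ∈ E} |f u - f w|^p)^(1/p)` for real `p`. -/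
noncomputable def gradLp {V : Type*} (G : SimpleGraph V) (f : V → ℝ) (p : ℝ) : ℝ :=
  (∑' e : G.edgeSet,
    Sym2.lift ⟨fun u w => |f u - f w| ^ p,
      fun u w => by dsimp only; rw [abs_sub_comm]⟩ e.1) ^ (1 / p)

/-- `‖∇f‖_{L²} = (∑_{{u,w} ∈ E} |f u - f w|²)^(1/2)`. -/
noncomputable def gradL2 {V : Type*} (G : SimpleGraph V) (f : V → ℝ) : ℝ :=
  Real.sqrt (∑' e : G.edgeSet,
    Sym2.lift ⟨fun u w => |f u - f w| ^ 2,
      fun u w => by dsimp only; rw [abs_sub_comm]⟩ e.1)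

/-- `g` is the rearrangement of `f` along the enumeration `v` (with `v 0 = v₁`):
`g` is obtained from `f` by permuting its values, and the values of `g` are
non-increasing along the enumeration. -/
def IsRearrangement {V : Type*} (v : ℕ → V) (f g : V → ℝ) : Prop :=
  (∃ σ : Equiv.Perm V, g = f ∘ σ) ∧ ∀ m n : ℕ, m ≤ n → g (v n) ≤ g (v m)

/-- The grid graph `(ℤ², ℓ¹)`. -/
def gridGraph : SimpleGraph (ℤ × ℤ) where
  Adj p q := |p.1 - q.1| + |p.2 - q.2| = 1
  symm := by
    constructor
    intro p q h
    try dsimp only at h ⊢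
    rw [abs_sub_comm q.1 p.1, abs_sub_comm q.2 p.2]
    exact h
  loopless := by constructor; intro p h; simp at h

/-- One step of the counterclockwise square spiral on `ℤ²`. -/
def spiralNext : ℤ × ℤ → ℤ × ℤ := fun p =>
  if 1 ≤ p.1 ∧ p.2 = -p.1 then (p.1 + 1, p.2)
  else if 1 ≤ p.1 ∧ -p.1 ≤ p.2 ∧ p.2 < p.1 then (p.1, p.2 + 1)
  else if 1 ≤ p.2 ∧ -p.2 < p.1 ∧ p.1 ≤ p.2 then (p.1 - 1, p.2)
  else if p.1 ≤ -1 ∧ p.1 < p.2 ∧ p.2 ≤ -p.1 then (p.1, p.2 - 1)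
  else (p.1 + 1, p.2)

/-- The spiral enumeration of `ℤ²`, 0-indexed: `spiral 0 = v₁ = (0,0)`,
`spiral 1 = v₂ = (1,0)`, `spiral 2 = v₃ = (1,1)`, `spiral 3 = v₄ = (0,1)`, … -/
def spiral (n : ℕ) : ℤ × ℤ := spiralNext^[n] (0, 0)

namespace TreeIsoAux

open SimpleGraph

variable {V : Type*} {G : SimpleGraph V}

/-- ordered boundary pairs -/
def bpairs (G : SimpleGraph V) (A : Set V) : Set (V × V) :=
  {p | p.1 ∈ A ∧ p.2 ∉ A ∧ G.Adj p.1 p.2}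

lemma edgeBoundary_eq_image (A : Set V) :
    edgeBoundary G A = (fun p : V × V => s(p.1, p.2)) '' bpairs G A := by
  ext e
  constructor
  · rintro ⟨he, u, w, rfl, hu, hw⟩
    exact ⟨(u, w), ⟨hu, hw, he⟩, rfl⟩
  · rintro ⟨⟨u, w⟩, ⟨hu, hw, hadj⟩, rfl⟩
    exact ⟨hadj, u, w, rfl, hu, hw⟩

lemma ncard_edgeBoundary (A : Set V) :
    (edgeBoundary G A).ncard = (bpairs G A).ncard := by
  rw [edgeBoundary_eq_image]
  apply Set.ncard_image_of_injOn
  rintro ⟨u, w⟩ ⟨hu, hw, -⟩ ⟨u', w'⟩ ⟨hu', hw', -⟩ h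
  beta_reduce at h
  rw [Sym2.eq_iff] at h
  rcases h with ⟨rfl, rfl⟩ | ⟨rfl, rfl⟩
  · rfl
  · exact absurd hu' hw

lemma exists_avoid (hconn : G.Connected) {r v w : V} (hvw : v ≠ w)
    (hdist : G.dist r w ≤ G.dist r v) :
    ∃ p : G.Walk r w, p.IsPath ∧ v ∉ p.support := by
  classical
  obtain ⟨p0, hp0⟩ := hconn.exists_walk_length_eq_dist r w
  refine ⟨p0.bypass, Walk.bypass_isPath p0, fun hv => ?_⟩
  have h1 : (p0.bypass.takeUntil v hv).length + (p0.bypass.dropUntil v hv).length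
      = p0.bypass.length := by
    rw [← Walk.length_append, Walk.take_spec]
  have h2 : p0.bypass.length ≤ G.dist r w :=
    le_trans (Walk.length_bypass_le p0) hp0.le
  have h3 : G.dist r v ≤ (p0.bypass.takeUntil v hv).length := dist_le _
  have h4 : (p0.bypass.dropUntil v hv).length ≠ 0 :=
    fun h => hvw (Walk.eq_of_length_eq_zero h)
  omega

lemma exists_leaf (hconn : G.Connected) (hacyc : G.IsAcyclic)
    {A : Set V} (hA : A.Finite) (hne : A.Nonempty)
    (hfin : ∀ u : V, (G.neighborSet u).Finite) :
    ∃ v ∈ A, (G.neighborSet v ∩ A).ncard ≤ 1 := by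
  obtain ⟨v, hv, hmax⟩ := Set.exists_max_image A (fun x => G.dist hne.choose x) hA hne
  refine ⟨v, hv, ?_⟩
  by_contra hcon
  push_neg at hcon
  obtain ⟨w1, w2, hw1, hw2, hne12⟩ :=
    (Set.one_lt_ncard_iff ((hfin v).inter_of_left A)).mp hcon
  set r := hne.choose with hr
  obtain ⟨hw1n, hw1A⟩ := hw1
  obtain ⟨hw2n, hw2A⟩ := hw2
  obtain ⟨p1, hp1, hvp1⟩ := exists_avoid hconn (G.ne_of_adj hw1n) (hmax w1 hw1A |>.trans_eq rfl)
  obtain ⟨p2, hp2, hvp2⟩ := exists_avoid hconn (G.ne_of_adj hw2n) (hmax w2 hw2A |>.trans_eq rfl)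
  have hR1 : (Walk.cons ((G.mem_neighborSet v w1).mp hw1n) p1.reverse).IsPath := by
    rw [Walk.cons_isPath_iff]
    refine ⟨hp1.reverse, ?_⟩
    rw [Walk.support_reverse, List.mem_reverse]
    exact hvp1
  have hR2 : (Walk.cons ((G.mem_neighborSet v w2).mp hw2n) p2.reverse).IsPath := by
    rw [Walk.cons_isPath_iff]
    refine ⟨hp2.reverse, ?_⟩
    rw [Walk.support_reverse, List.mem_reverse]
    exact hvp2
  have huniq := isAcyclic_iff_path_unique.mp hacyc ⟨_, hR1⟩ ⟨_, hR2⟩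
  have heq : (Walk.cons ((G.mem_neighborSet v w1).mp hw1n) p1.reverse) = (Walk.cons ((G.mem_neighborSet v w2).mp hw2n) p2.reverse) :=
    congrArg Subtype.val huniq
  have hs : (Walk.cons ((G.mem_neighborSet v w1).mp hw1n) p1.reverse).support = (Walk.cons ((G.mem_neighborSet v w2).mp hw2n) p2.reverse).support := by
    rw [heq]
  rw [Walk.support_cons, Walk.support_cons,
    Walk.support_eq_cons p1.reverse, Walk.support_eq_cons p2.reverse] at hs
  simp only [List.cons.injEq] at hs
  exact hne12 hs.2.1

end TreeIsoAux

namespace TreeIsoAux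

variable {V : Type*} {G : SimpleGraph V}

open SimpleGraph

lemma bpairs_finite {A : Set V} (hA : A.Finite)
    (hfin : ∀ u : V, (G.neighborSet u).Finite) : (bpairs G A).Finite := by
  apply Set.Finite.subset (hA.biUnion (fun u (_ : u ∈ A) => ((hfin u).image (fun w => (u, w)))))
  rintro ⟨u, w⟩ ⟨hu, hw, hadj⟩
  exact Set.mem_biUnion hu ⟨w, hadj, rfl⟩

lemma key (d : ℕ) (hd : 2 ≤ d) (hconn : G.Connected) (hacyc : G.IsAcyclic)
    (hreg : ∀ u : V, (G.neighborSet u).ncard = d)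
    (hfin : ∀ u : V, (G.neighborSet u).Finite) :
    ∀ n : ℕ, ∀ A : Set V, A.Finite → A.Nonempty → A.ncard = n →
      (d - 2) * n + 2 ≤ (bpairs G A).ncard := by
  obtain ⟨c, rfl⟩ : ∃ c, d = c + 2 := ⟨d - 2, by omega⟩
  simp only [Nat.add_sub_cancel]
  intro n
  induction n with
  | zero =>
    intro A hA hne hcard
    exact absurd ((Set.ncard_eq_zero hA).mp hcard) hne.ne_empty
  | succ n ih =>
    intro A hA hne hcard
    obtain ⟨v, hv, hleaf⟩ := exists_leaf hconn hacyc hA hne hfin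
    set A' : Set V := A \ {v} with hA'def
    have hA' : A'.Finite := hA.diff
    have hcard' : A'.ncard = n := by
      rw [hA'def, Set.ncard_diff_singleton_of_mem hv, hcard]
      omega
    have hsub' : A' ⊆ A := Set.diff_subset
    -- N(v) ∩ A' = N(v) ∩ A
    have hNeq : G.neighborSet v ∩ A' = G.neighborSet v ∩ A := by
      ext x
      simp only [hA'def, Set.mem_inter_iff, Set.mem_diff, Set.mem_singleton_iff,
        mem_neighborSet]
      exact ⟨fun ⟨h1, h2, _⟩ => ⟨h1, h2⟩, fun ⟨h1, h2⟩ => ⟨h1, h2, h1.ne'⟩⟩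
    have hk : (G.neighborSet v ∩ A').ncard ≤ 1 := by rw [hNeq]; exact hleaf
    -- e1
    have hcover : (G.neighborSet v ∩ A') ∪ (G.neighborSet v \ A) = G.neighborSet v := by
      ext x
      simp only [hA'def, Set.mem_union, Set.mem_inter_iff, Set.mem_diff,
        Set.mem_singleton_iff, mem_neighborSet]
      constructor
      · rintro (⟨h, -⟩ | ⟨h, -⟩) <;> exact h
      · intro h
        by_cases hx : x ∈ A
        · exact Or.inl ⟨h, hx, h.ne'⟩
        · exact Or.inr ⟨h, hx⟩
    have hdisj1 : Disjoint (G.neighborSet v ∩ A') (G.neighborSet v \ A) :=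
      Set.disjoint_left.mpr (fun x ⟨_, hx⟩ ⟨_, hx'⟩ => hx' (hsub' hx))
    have e1 : (G.neighborSet v ∩ A').ncard + (G.neighborSet v \ A).ncard = c + 2 := by
      rw [← Set.ncard_union_eq hdisj1 ((hfin v).inter_of_left _) (hfin v).diff,
        hcover, hreg v]
    -- T
    set T : Set (V × V) := (fun u => (u, v)) '' (G.neighborSet v ∩ A') with hTdef
    have hTsub : T ⊆ bpairs G A' := by
      rintro _ ⟨u, ⟨hun, huA'⟩, rfl⟩
      exact ⟨huA', fun h => h.2 rfl, hun.symm⟩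
    have hTcard : T.ncard = (G.neighborSet v ∩ A').ncard :=
      Set.ncard_image_of_injective _ (fun a b h => (Prod.mk.injEq _ _ _ _).mp h |>.1)
    have e2 : (bpairs G A' \ T).ncard + T.ncard = (bpairs G A').ncard :=
      Set.ncard_diff_add_ncard_of_subset hTsub (bpairs_finite hA' hfin)
    -- split
    have hsplit : bpairs G A =
        ((fun w => (v, w)) '' (G.neighborSet v \ A)) ∪ (bpairs G A' \ T) := by
      ext ⟨u, w⟩
      constructor
      · rintro ⟨hu, hw, hadj⟩
        by_cases huv : u = v
        · subst huv
          exact Or.inl ⟨w, ⟨hadj, hw⟩, rfl⟩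
        · refine Or.inr ⟨⟨⟨hu, huv⟩, fun hw' => hw hw'.1, hadj⟩, ?_⟩
          rintro ⟨u', ⟨-, -⟩, heq⟩
          obtain ⟨rfl, rfl⟩ := (Prod.mk.injEq _ _ _ _).mp heq.symm
          exact hw hv
      · rintro (⟨w', ⟨hw'N, hw'A⟩, heq⟩ | ⟨⟨⟨huA, hunv⟩, hwA', hadj⟩, hT⟩)
        · obtain ⟨rfl, rfl⟩ := (Prod.mk.injEq _ _ _ _).mp heq
          exact ⟨hv, hw'A, hw'N⟩
        · refine ⟨huA, ?_, hadj⟩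
          intro hwA
          rcases eq_or_ne w v with rfl | hwv
          · exact hT ⟨u, ⟨hadj.symm, huA, hunv⟩, rfl⟩
          · exact hwA' ⟨hwA, hwv⟩
    have hdisj2 : Disjoint ((fun w => (v, w)) '' (G.neighborSet v \ A)) (bpairs G A' \ T) := by
      rw [Set.disjoint_left]
      rintro _ ⟨w', -, rfl⟩ ⟨⟨⟨-, hnv⟩, -, -⟩, -⟩
      exact hnv rfl
    have e3 : (bpairs G A).ncard =
        (G.neighborSet v \ A).ncard + (bpairs G A' \ T).ncard := by
      rw [hsplit, Set.ncard_union_eq hdisj2 ((hfin v).diff.image _)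
        (bpairs_finite hA' hfin).diff,
        Set.ncard_image_of_injective _ (fun a b h => (Prod.mk.injEq _ _ _ _).mp h |>.2)]
    rcases Nat.eq_zero_or_pos n with rfl | hn
    · -- A' empty
      have hA'e : A' = ∅ := (Set.ncard_eq_zero hA').mp hcard'
      have hP' : (bpairs G A').ncard = 0 := by
        have : bpairs G A' = ∅ := by
          rw [hA'e]; ext ⟨u, w⟩; simp [bpairs]
        rw [this, Set.ncard_empty]
      have hk0 : (G.neighborSet v ∩ A').ncard = 0 := by
        rw [hA'e]; simp
      have : c * (0 + 1) = c := by ring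
      rw [this]
      omega
    · have hne' : A'.Nonempty := (Set.ncard_pos hA').mp (hcard' ▸ hn)
      have hih := ih A' hA' hne' hcard'
      have hmul : c * (n + 1) = c * n + c := by ring
      rw [hmul]
      set q := c * n with hq
      omega

end TreeIsoAux


/-- On the infinite `d`-regular tree (`d ≥ 2`), every finite nonempty
set `A` of vertices satisfies `#∂_E(A) ≥ (d-2)·#A + 2`. -/
theorem tree_edge_isoperimetry {V : Type*} (G : SimpleGraph V) (d : ℕ) (hd : 2 ≤ d)
    (hconn : G.Connected) (hacyc : G.IsAcyclic)
    (hreg : ∀ u : V, (G.neighborSet u).ncard = d)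
    (A : Set V) (hA : A.Finite) (hne : A.Nonempty) :
    (d - 2) * A.ncard + 2 ≤ (edgeBoundary G A).ncard := by
  have hfin : ∀ u : V, (G.neighborSet u).Finite := fun u =>
    Set.finite_of_ncard_ne_zero (by rw [hreg]; omega)
  rw [TreeIsoAux.ncard_edgeBoundary]
  exact TreeIsoAux.key d hd hconn hacyc hreg hfin A.ncard A hA hne rfl
end

section
/- Let d ≥ 2 and let G=(V,E) be a connected, acyclic, d-regular simple graph (the infinite d-regular tree). Then for every finite nonempty subset A ⊆ V, the vertex boundary satisfies #∂_V(A) ≥ (d−2)·#A + 2. -/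
open Real

theorem SimpleGraph.Walk.getVert_cons_one {V : Type*} {G : SimpleGraph V} {u v w : V}
    (q : G.Walk v w) (hadj : G.Adj u v) : (SimpleGraph.Walk.cons hadj q).getVert 1 = v := by
  simp [SimpleGraph.Walk.getVert_cons_succ (n := 0)]

open SimpleGraph in
/-- On the infinite `d`-regular tree (`d ≥ 2`), every finite nonempty
set `A` of vertices satisfies `#∂_V(A) ≥ (d-2)·#A + 2`. -/
theorem tree_vertex_isoperimetry {V : Type*} (G : SimpleGraph V) (d : ℕ) (hd : 2 ≤ d)
    (hconn : G.Connected) (hacyc : G.IsAcyclic)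
    (hreg : ∀ u : V, (G.neighborSet u).ncard = d)
    (A : Set V) (hA : A.Finite) (hne : A.Nonempty) :
    (d - 2) * A.ncard + 2 ≤ (vertexBoundary G A).ncard := by
  classical
  have hNfin : ∀ v : V, (G.neighborSet v).Finite := by
    intro v
    by_contra h
    have h0 := Set.Infinite.ncard h
    rw [hreg v] at h0; omega
  have hr : ∃ r : V, r ∉ A := by
    by_contra h
    push_neg at h
    have huniv : (Set.univ : Set V).Finite := hA.subset (fun v _ => h v)
    have : Finite V := Set.finite_univ_iff.mp huniv
    have : Fintype V := Fintype.ofFinite V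
    have : DecidableRel G.Adj := Classical.decRel _
    have : DecidableEq V := Classical.decEq V
    have htree : G.IsTree := ⟨hconn, hacyc⟩
    have hcard := htree.card_edgeFinset
    have hhs := G.sum_degrees_eq_twice_card_edges
    have hdeg : ∀ v : V, G.degree v = d := by
      intro v
      rw [← hreg v, ← SimpleGraph.card_neighborSet_eq_degree,
        Set.ncard_eq_toFinset_card', Set.toFinset_card]
    rw [Finset.sum_congr rfl (fun v _ => hdeg v), Finset.sum_const, smul_eq_mul] at hhs
    have hpos : 0 < Fintype.card V := Fintype.card_pos_iff.mpr ⟨hne.some⟩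
    rw [Finset.card_univ] at hhs
    have h2 : Fintype.card V * 2 ≤ Fintype.card V * d := Nat.mul_le_mul_left _ hd
    rw [hhs] at h2
    omega
  obtain ⟨r, hrA⟩ := hr
  -- unique path to the root
  let P : ∀ v : V, G.Path v r := fun v => (hconn v r).some.toPath
  have hPu : ∀ (v : V) (q : G.Walk v r), q.IsPath → q = (P v).1 := fun v q hq =>
    congrArg Subtype.val (hacyc.path_unique ⟨q, hq⟩ (P v))
  set parent : V → V := fun v => (P v).1.getVert 1 with hparent
  have hparent_r : parent r = r := by
    have h0 : (SimpleGraph.Walk.nil : G.Walk r r) = (P r).1 :=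
      hPu r SimpleGraph.Walk.nil SimpleGraph.Walk.IsPath.nil
    simp only [hparent, ← h0]
    rfl
  have hcons : ∀ v : V, v ≠ r → ∃ (h : G.Adj v (parent v)) (q : G.Walk (parent v) r),
      (P v).1 = SimpleGraph.Walk.cons h q := by
    intro v hv
    obtain ⟨x, h, q, hw⟩ := SimpleGraph.Walk.exists_eq_cons_of_ne hv (P v).1
    have hx : parent v = x := by rw [hparent]; simp only [hw, Walk.getVert_cons_one]
    subst hx
    exact ⟨h, q, hw⟩
  have hadjp : ∀ v : V, v ≠ r → G.Adj v (parent v) := fun v hv => (hcons v hv).1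
  have hdepth : ∀ v : V, v ≠ r → (P (parent v)).1.length < (P v).1.length := by
    intro v hv
    obtain ⟨h, q, hw⟩ := hcons v hv
    have hq : q.IsPath := by
      have := (P v).2
      rw [hw, SimpleGraph.Walk.cons_isPath_iff] at this
      exact this.1
    have hq' : q = (P (parent v)).1 := hPu _ q hq
    rw [hw, ← hq']
    simp [SimpleGraph.Walk.length_cons]
  -- key orientation lemma
  have hkey : ∀ u v : V, G.Adj u v → parent u = v ∨ parent v = u := by
    intro u v huv
    by_cases hv : v ∈ (P u).1.support
    · left
      have hq' : ((P u).1.takeUntil v hv).IsPath := (P u).2.takeUntil hv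
      have hsingle : (SimpleGraph.Walk.cons huv SimpleGraph.Walk.nil : G.Walk u v).IsPath := by
        simp [SimpleGraph.Walk.cons_isPath_iff, huv.ne]
      have hEq : (P u).1.takeUntil v hv = SimpleGraph.Walk.cons huv SimpleGraph.Walk.nil :=
        congrArg Subtype.val (hacyc.path_unique ⟨_, hq'⟩ ⟨_, hsingle⟩)
      have hspec := SimpleGraph.Walk.take_spec (P u).1 hv
      rw [hEq] at hspec
      show (P u).1.getVert 1 = v
      rw [← hspec, SimpleGraph.Walk.cons_append, Walk.getVert_cons_one]
    · right
      have hpath : (SimpleGraph.Walk.cons huv.symm (P u).1).IsPath := by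
        rw [SimpleGraph.Walk.cons_isPath_iff]
        exact ⟨(P u).2, hv⟩
      have hEq := hPu v _ hpath
      show (P v).1.getVert 1 = u
      rw [← hEq, Walk.getVert_cons_one]
  -- minimal-depth element of A
  obtain ⟨m, hmA, hmmin⟩ := Set.exists_min_image A (fun v => (P v).1.length) hA hne
  have hmr : m ≠ r := fun h => hrA (h ▸ hmA)
  set p := parent m with hp
  have hpA : p ∉ A := fun hmem => absurd (hmmin p hmem) (not_le.mpr (hdepth m hmr))
  have hppA : parent p ∉ A := by
    by_cases hpr : p = r
    · rw [hpr, hparent_r]; exact hrA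
    · intro hmem
      have h1 := hmmin _ hmem
      have h2 := hdepth p hpr
      have h3 := hdepth m hmr
      rw [← hp] at h3
      omega
  have hpadj : G.Adj p m := (hadjp m hmr).symm
  -- boundary is finite
  have hbfin : (vertexBoundary G A).Finite := by
    apply Set.Finite.subset (Set.Finite.biUnion hA (fun a _ => hNfin a))
    rintro u ⟨huA, w, hwA, hadj⟩
    exact Set.mem_biUnion hwA hadj.symm
  -- the children finset
  let A' : Finset V := hA.toFinset
  let nb : V → Finset V := fun a => (hNfin a).toFinset
  have hnbcard : ∀ a, (nb a).card = d := fun a => by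
    rw [← hreg a, Set.ncard_eq_toFinset_card _ (hNfin a)]
  let ChF : Finset V := A'.biUnion (fun a => (nb a).filter (fun u => parent u = a))
  have hChmem : ∀ u, u ∈ ChF ↔ parent u ∈ A ∧ G.Adj (parent u) u := by
    intro u
    simp only [ChF, Finset.mem_biUnion, Finset.mem_filter, Set.Finite.mem_toFinset,
      SimpleGraph.mem_neighborSet, A', nb]
    constructor
    · rintro ⟨a, haA, hadj, rfl⟩
      exact ⟨haA, hadj⟩
    · rintro ⟨h1, h2⟩
      exact ⟨parent u, h1, h2, rfl⟩
  have hChcard : A'.card * (d - 1) ≤ ChF.card := by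
    rw [Finset.card_biUnion]
    · calc A'.card * (d - 1) = ∑ _a ∈ A', (d - 1) := by
            rw [Finset.sum_const, smul_eq_mul]
        _ ≤ ∑ a ∈ A', ((nb a).filter (fun u => parent u = a)).card := by
            apply Finset.sum_le_sum
            intro a _
            have hsub : (nb a).erase (parent a) ⊆ (nb a).filter (fun u => parent u = a) := by
              intro u hu
              rw [Finset.mem_erase] at hu
              obtain ⟨hne', hmem⟩ := hu
              rw [Finset.mem_filter]
              refine ⟨hmem, ?_⟩
              have hadj : G.Adj a u := (Set.Finite.mem_toFinset _).mp hmem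
              rcases hkey a u hadj with h | h
              · exact absurd h.symm hne'
              · exact h
            calc d - 1 = (nb a).card - 1 := by rw [hnbcard]
              _ ≤ ((nb a).erase (parent a)).card := Finset.pred_card_le_card_erase
              _ ≤ _ := Finset.card_le_card hsub
    · intro a _ b _ hab
      rw [Function.onFun, Finset.disjoint_left]
      intro u hu hu'
      rw [Finset.mem_filter] at hu hu'
      exact hab (hu.2 ▸ hu'.2 ▸ rfl)
  -- split into inside/outside A
  let K : Finset V := ChF.filter (fun u => u ∈ A)
  let DF : Finset V := ChF.filter (fun u => u ∉ A)
  have hsplit : K.card + DF.card = ChF.card :=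
    Finset.card_filter_add_card_filter_not _
  have hK : K.card ≤ A'.card - 1 := by
    have hKsub : K ⊆ A'.erase m := by
      intro u hu
      rw [Finset.mem_filter] at hu
      rw [Finset.mem_erase]
      refine ⟨?_, (Set.Finite.mem_toFinset _).mpr hu.2⟩
      rintro rfl
      exact hpA ((hChmem u).mp hu.1).1
    calc K.card ≤ (A'.erase m).card := Finset.card_le_card hKsub
      _ = A'.card - 1 := Finset.card_erase_of_mem ((Set.Finite.mem_toFinset _).mpr hmA)
  have hpD : p ∉ DF := by
    intro h
    rw [Finset.mem_filter] at h
    exact hppA ((hChmem p).mp h.1).1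
  have hfinal_sub : ↑(insert p DF) ⊆ vertexBoundary G A := by
    intro u hu
    rw [Finset.coe_insert, Set.mem_insert_iff] at hu
    rcases hu with rfl | hu
    · exact ⟨hpA, m, hmA, hpadj⟩
    · rw [Finset.mem_coe, Finset.mem_filter] at hu
      obtain ⟨hch, hnA⟩ := hu
      obtain ⟨h1, h2⟩ := (hChmem u).mp hch
      exact ⟨hnA, parent u, h1, h2.symm⟩
  have hcard_ins : (insert p DF).card = DF.card + 1 := Finset.card_insert_of_notMem hpD
  have hle : (insert p DF).card ≤ (vertexBoundary G A).ncard := by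
    rw [← Set.ncard_coe_finset]
    exact Set.ncard_le_ncard hfinal_sub hbfin
  have hAcard : A.ncard = A'.card := Set.ncard_eq_toFinset_card A hA
  have hone : 1 ≤ A'.card := by
    rw [← hAcard]
    exact (Set.ncard_pos hA).mpr hne
  have hy : A'.card * (d - 1) = (d - 2) * A'.card + A'.card := by
    have : d - 1 = (d - 2) + 1 := by omega
    rw [this]; ring
  rw [hAcard]
  omega
end

section
/- Let A ⊆ ℤ² be a finite nonempty set of n vertices of the grid graph (ℤ²,ℓ¹), and let A_x = {x ∈ ℤ : ∃ y, (x,y) ∈ A} and A_y = {y ∈ ℤ : ∃ x, (x,y) ∈ A} be its coordinate projections. Then #∂_E(A) ≥ 2·#A_x + 2·#A_y, and consequently #∂_E(A) ≥ 4·√n. -/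
section Aux

open Set

/-- Vertical top edge from column max. -/
noncomputable def eT (A : Set (ℤ × ℤ)) (x : ℤ) : Sym2 (ℤ × ℤ) :=
  s((x, sSup {y | (x, y) ∈ A}), (x, sSup {y | (x, y) ∈ A} + 1))

noncomputable def eB (A : Set (ℤ × ℤ)) (x : ℤ) : Sym2 (ℤ × ℤ) :=
  s((x, sInf {y | (x, y) ∈ A}), (x, sInf {y | (x, y) ∈ A} - 1))

noncomputable def eR (A : Set (ℤ × ℤ)) (y : ℤ) : Sym2 (ℤ × ℤ) :=
  s((sSup {x | (x, y) ∈ A}, y), (sSup {x | (x, y) ∈ A} + 1, y))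

noncomputable def eL (A : Set (ℤ × ℤ)) (y : ℤ) : Sym2 (ℤ × ℤ) :=
  s((sInf {x | (x, y) ∈ A}, y), (sInf {x | (x, y) ∈ A} - 1, y))

lemma col_props (A : Set (ℤ × ℤ)) (hA : A.Finite) {x : ℤ} (hx : x ∈ Prod.fst '' A) :
    (x, sSup {y | (x, y) ∈ A}) ∈ A ∧ (x, sInf {y | (x, y) ∈ A}) ∈ A ∧
    (x, sSup {y | (x, y) ∈ A} + 1) ∉ A ∧ (x, sInf {y | (x, y) ∈ A} - 1) ∉ A ∧
    sInf {y | (x, y) ∈ A} ≤ sSup {y | (x, y) ∈ A} := by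
  have hfin : {y | (x, y) ∈ A}.Finite := by
    apply Set.Finite.preimage (f := fun y => (x, y)) ?_ hA
    intro a _ b _ h
    simpa using h
  have hne : {y | (x, y) ∈ A}.Nonempty := by
    obtain ⟨⟨a, b⟩, hab, rfl⟩ := hx
    exact ⟨b, hab⟩
  have hSup := hne.csSup_mem hfin
  have hInf := hne.csInf_mem hfin
  refine ⟨hSup, hInf, ?_, ?_, csInf_le_csSup hne hfin.bddBelow hfin.bddAbove⟩
  · intro h
    have := le_csSup hfin.bddAbove h
    omega
  · intro h
    have := csInf_le hfin.bddBelow h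
    omega

lemma row_props (A : Set (ℤ × ℤ)) (hA : A.Finite) {y : ℤ} (hy : y ∈ Prod.snd '' A) :
    (sSup {x | (x, y) ∈ A}, y) ∈ A ∧ (sInf {x | (x, y) ∈ A}, y) ∈ A ∧
    (sSup {x | (x, y) ∈ A} + 1, y) ∉ A ∧ (sInf {x | (x, y) ∈ A} - 1, y) ∉ A ∧
    sInf {x | (x, y) ∈ A} ≤ sSup {x | (x, y) ∈ A} := by
  have hfin : {x | (x, y) ∈ A}.Finite := by
    apply Set.Finite.preimage (f := fun x => (x, y)) ?_ hA
    intro a _ b _ h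
    simpa using h
  have hne : {x | (x, y) ∈ A}.Nonempty := by
    obtain ⟨⟨a, b⟩, hab, rfl⟩ := hy
    exact ⟨a, hab⟩
  have hSup := hne.csSup_mem hfin
  have hInf := hne.csInf_mem hfin
  refine ⟨hSup, hInf, ?_, ?_, csInf_le_csSup hne hfin.bddBelow hfin.bddAbove⟩
  · intro h
    have := le_csSup hfin.bddAbove h
    omega
  · intro h
    have := csInf_le hfin.bddBelow h
    omega

end Aux


open Real

/-- For a finite nonempty `A ⊆ ℤ²` with `n` elements, the edge
boundary in the grid graph satisfies `#∂_E(A) ≥ 2·#A_x + 2·#A_y` where `A_x, A_y`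
are the coordinate projections, and consequently `#∂_E(A) ≥ 4√n`. -/
theorem grid_projection_bound (A : Set (ℤ × ℤ)) (hA : A.Finite) (hne : A.Nonempty)
    (n : ℕ) (hn : A.ncard = n) :
    2 * (Prod.fst '' A).ncard + 2 * (Prod.snd '' A).ncard
        ≤ (edgeBoundary gridGraph A).ncard ∧
      4 * Real.sqrt n ≤ ((edgeBoundary gridGraph A).ncard : ℝ) := by

  classical
  have hAxf : (Prod.fst '' A).Finite := hA.image _
  have hAyf : (Prod.snd '' A).Finite := hA.image _
  -- finiteness of the edge boundary
  have hEBfin : (edgeBoundary gridGraph A).Finite := by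
    have hD : ({((1 : ℤ), (0 : ℤ)), (-1, 0), (0, 1), (0, -1)} : Set (ℤ × ℤ)).Finite :=
      Set.toFinite _
    apply Set.Finite.subset ((hA.prod hD).image
      (fun p : (ℤ × ℤ) × (ℤ × ℤ) => s(p.1, (p.1.1 + p.2.1, p.1.2 + p.2.2))))
    rintro e ⟨hE, ⟨u1, u2⟩, ⟨w1, w2⟩, rfl, hu, hw⟩
    have hadj : |u1 - w1| + |u2 - w2| = 1 := hE
    rw [Int.abs_eq_natAbs, Int.abs_eq_natAbs] at hadj
    refine ⟨((u1, u2), (w1 - u1, w2 - u2)), ⟨hu, ?_⟩, ?_⟩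
    · simp only [Set.mem_insert_iff, Set.mem_singleton_iff, Prod.ext_iff]
      omega
    · show s((u1, u2), (u1 + (w1 - u1), u2 + (w2 - u2))) = s((u1, u2), (w1, w2))
      norm_num
  -- the four families of boundary edges
  have hTmem : ∀ x ∈ Prod.fst '' A, eT A x ∈ edgeBoundary gridGraph A := by
    intro x hx
    obtain ⟨h1, _, h3, _, _⟩ := col_props A hA hx
    refine ⟨?_, _, _, rfl, h1, h3⟩
    show |x - x| + |sSup {y | (x, y) ∈ A} - (sSup {y | (x, y) ∈ A} + 1)| = 1
    rw [sub_self, show sSup {y | (x, y) ∈ A} - (sSup {y | (x, y) ∈ A} + 1) = -1 by ring]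
    decide
  have hBmem : ∀ x ∈ Prod.fst '' A, eB A x ∈ edgeBoundary gridGraph A := by
    intro x hx
    obtain ⟨_, h2, _, h4, _⟩ := col_props A hA hx
    refine ⟨?_, _, _, rfl, h2, h4⟩
    show |x - x| + |sInf {y | (x, y) ∈ A} - (sInf {y | (x, y) ∈ A} - 1)| = 1
    rw [sub_self, show sInf {y | (x, y) ∈ A} - (sInf {y | (x, y) ∈ A} - 1) = 1 by ring]
    decide
  have hRmem : ∀ y ∈ Prod.snd '' A, eR A y ∈ edgeBoundary gridGraph A := by
    intro y hy
    obtain ⟨h1, _, h3, _, _⟩ := row_props A hA hy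
    refine ⟨?_, _, _, rfl, h1, h3⟩
    show |sSup {x | (x, y) ∈ A} - (sSup {x | (x, y) ∈ A} + 1)| + |y - y| = 1
    rw [sub_self, show sSup {x | (x, y) ∈ A} - (sSup {x | (x, y) ∈ A} + 1) = -1 by ring]
    decide
  have hLmem : ∀ y ∈ Prod.snd '' A, eL A y ∈ edgeBoundary gridGraph A := by
    intro y hy
    obtain ⟨_, h2, _, h4, _⟩ := row_props A hA hy
    refine ⟨?_, _, _, rfl, h2, h4⟩
    show |sInf {x | (x, y) ∈ A} - (sInf {x | (x, y) ∈ A} - 1)| + |y - y| = 1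
    rw [sub_self, show sInf {x | (x, y) ∈ A} - (sInf {x | (x, y) ∈ A} - 1) = 1 by ring]
    decide
  -- injectivity
  have hTinj : Set.InjOn (eT A) (Prod.fst '' A) := by
    intro x _ x' _ h
    simp only [eT, Sym2.eq_iff, Prod.ext_iff] at h
    omega
  have hBinj : Set.InjOn (eB A) (Prod.fst '' A) := by
    intro x _ x' _ h
    simp only [eB, Sym2.eq_iff, Prod.ext_iff] at h
    omega
  have hRinj : Set.InjOn (eR A) (Prod.snd '' A) := by
    intro y _ y' _ h
    simp only [eR, Sym2.eq_iff, Prod.ext_iff] at h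
    omega
  have hLinj : Set.InjOn (eL A) (Prod.snd '' A) := by
    intro y _ y' _ h
    simp only [eL, Sym2.eq_iff, Prod.ext_iff] at h
    omega
  -- pairwise disjointness of the four image families
  have hTB : Disjoint (eT A '' (Prod.fst '' A)) (eB A '' (Prod.fst '' A)) := by
    rw [Set.disjoint_left]
    rintro e ⟨x, hx, rfl⟩ ⟨x', hx', heq⟩
    obtain ⟨_, _, _, _, hle⟩ := col_props A hA hx
    simp only [eT, eB, Sym2.eq_iff, Prod.ext_iff] at heq
    obtain (⟨⟨rfl, h1⟩, _, h2⟩ | ⟨⟨rfl, h1⟩, _, h2⟩) := heq <;> omega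
  have hRL : Disjoint (eR A '' (Prod.snd '' A)) (eL A '' (Prod.snd '' A)) := by
    rw [Set.disjoint_left]
    rintro e ⟨y, hy, rfl⟩ ⟨y', hy', heq⟩
    obtain ⟨_, _, _, _, hle⟩ := row_props A hA hy
    simp only [eR, eL, Sym2.eq_iff, Prod.ext_iff] at heq
    obtain (⟨⟨h1, rfl⟩, h2, _⟩ | ⟨⟨h1, rfl⟩, h2, _⟩) := heq <;> omega
  have hVert_horiz : ∀ x y : ℤ, ∀ a b : ℤ,
      s(((x : ℤ), a), (x, a + 1)) ≠ s((b, y), (b + 1, y)) ∧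
      s(((x : ℤ), a), (x, a + 1)) ≠ s((b, y), (b - 1, y)) ∧
      s(((x : ℤ), a), (x, a - 1)) ≠ s((b, y), (b + 1, y)) ∧
      s(((x : ℤ), a), (x, a - 1)) ≠ s((b, y), (b - 1, y)) := by
    intro x y a b
    refine ⟨?_, ?_, ?_, ?_⟩ <;>
    · intro h
      simp only [Sym2.eq_iff, Prod.ext_iff] at h
      omega
  have hTR : Disjoint (eT A '' (Prod.fst '' A)) (eR A '' (Prod.snd '' A)) := by
    rw [Set.disjoint_left]
    rintro e ⟨x, hx, rfl⟩ ⟨y, hy, heq⟩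
    exact (hVert_horiz x y _ _).1 heq.symm
  have hTL : Disjoint (eT A '' (Prod.fst '' A)) (eL A '' (Prod.snd '' A)) := by
    rw [Set.disjoint_left]
    rintro e ⟨x, hx, rfl⟩ ⟨y, hy, heq⟩
    exact (hVert_horiz x y _ _).2.1 heq.symm
  have hBR : Disjoint (eB A '' (Prod.fst '' A)) (eR A '' (Prod.snd '' A)) := by
    rw [Set.disjoint_left]
    rintro e ⟨x, hx, rfl⟩ ⟨y, hy, heq⟩
    exact (hVert_horiz x y _ _).2.2.1 heq.symm
  have hBL : Disjoint (eB A '' (Prod.fst '' A)) (eL A '' (Prod.snd '' A)) := by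
    rw [Set.disjoint_left]
    rintro e ⟨x, hx, rfl⟩ ⟨y, hy, heq⟩
    exact (hVert_horiz x y _ _).2.2.2 heq.symm
  -- the combined set
  set S : Set (Sym2 (ℤ × ℤ)) :=
    eT A '' (Prod.fst '' A) ∪ eB A '' (Prod.fst '' A) ∪
      eR A '' (Prod.snd '' A) ∪ eL A '' (Prod.snd '' A) with hS
  have hSsub : S ⊆ edgeBoundary gridGraph A := by
    rintro e (((⟨x, hx, rfl⟩ | ⟨x, hx, rfl⟩) | ⟨y, hy, rfl⟩) | ⟨y, hy, rfl⟩)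
    · exact hTmem x hx
    · exact hBmem x hx
    · exact hRmem y hy
    · exact hLmem y hy
  have hTf : (eT A '' (Prod.fst '' A)).Finite := hAxf.image _
  have hBf : (eB A '' (Prod.fst '' A)).Finite := hAxf.image _
  have hRf : (eR A '' (Prod.snd '' A)).Finite := hAyf.image _
  have hLf : (eL A '' (Prod.snd '' A)).Finite := hAyf.image _
  have hScard : S.ncard = 2 * (Prod.fst '' A).ncard + 2 * (Prod.snd '' A).ncard := by
    rw [hS]
    rw [Set.ncard_union_eq (by
        refine Set.disjoint_union_left.mpr ⟨Set.disjoint_union_left.mpr ⟨hTL, hBL⟩, hRL⟩)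
      (((hTf.union hBf).union hRf)) hLf]
    rw [Set.ncard_union_eq (Set.disjoint_union_left.mpr ⟨hTR, hBR⟩) (hTf.union hBf) hRf]
    rw [Set.ncard_union_eq hTB hTf hBf]
    rw [Set.ncard_image_of_injOn hTinj, Set.ncard_image_of_injOn hBinj,
      Set.ncard_image_of_injOn hRinj, Set.ncard_image_of_injOn hLinj]
    ring
  have key : 2 * (Prod.fst '' A).ncard + 2 * (Prod.snd '' A).ncard
      ≤ (edgeBoundary gridGraph A).ncard := by
    rw [← hScard]
    exact Set.ncard_le_ncard hSsub hEBfin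
  refine ⟨key, ?_⟩
  -- second part
  have hprodcard : ((Prod.fst '' A) ×ˢ (Prod.snd '' A)).ncard
      = (Prod.fst '' A).ncard * (Prod.snd '' A).ncard := by
    rw [Set.ncard_eq_toFinset_card _ (hAxf.prod hAyf), Set.ncard_eq_toFinset_card _ hAxf,
      Set.ncard_eq_toFinset_card _ hAyf, ← Finset.card_product]
    congr 1
    ext p
    simp
  have hsub : A ⊆ (Prod.fst '' A) ×ˢ (Prod.snd '' A) := by
    intro p hp
    exact ⟨⟨p, hp, rfl⟩, ⟨p, hp, rfl⟩⟩
  have hnab : n ≤ (Prod.fst '' A).ncard * (Prod.snd '' A).ncard := by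
    rw [← hprodcard, ← hn]
    exact Set.ncard_le_ncard hsub (hAxf.prod hAyf)
  set a : ℕ := (Prod.fst '' A).ncard
  set b : ℕ := (Prod.snd '' A).ncard
  have h1 : Real.sqrt n ≤ Real.sqrt (a * b) := by
    apply Real.sqrt_le_sqrt
    exact_mod_cast hnab
  have h2 : Real.sqrt ((a : ℝ) * b) = Real.sqrt a * Real.sqrt b :=
    Real.sqrt_mul (by positivity) _
  have h3 : 4 * (Real.sqrt a * Real.sqrt b) ≤ 2 * (a : ℝ) + 2 * b := by
    nlinarith [sq_nonneg (Real.sqrt a - Real.sqrt b), Real.sq_sqrt (by positivity : (0:ℝ) ≤ (a:ℝ)),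
      Real.sq_sqrt (by positivity : (0:ℝ) ≤ (b:ℝ)), Real.sqrt_nonneg (a:ℝ), Real.sqrt_nonneg (b:ℝ)]
  have h4 : (2 * (a : ℝ) + 2 * b) ≤ ((edgeBoundary gridGraph A).ncard : ℝ) := by
    exact_mod_cast key
  push_cast at h1
  nlinarith [h1, h2, h3, h4]
end

section
/- Let f : ℕ×{0,1} → ℝ_{≥0} be finitely supported on the ladder graph and let f* denote its rearrangement with respect to the snake enumeration. Then ‖∇f*‖_{L¹} ≤ ‖∇f‖_{L¹} and ‖∇f*‖_{L^∞} ≤ 2·‖∇f‖_{L^∞}. -/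
open Real

/-- The ladder graph on `ℕ × {0,1}`: `(m,i)` adjacent to `(n,j)` iff `|m-n|+|i-j| = 1`. -/
def ladderGraph : SimpleGraph (ℕ × Fin 2) where
  Adj a b := |(a.1 : ℤ) - b.1| + |(a.2.1 : ℤ) - b.2.1| = 1
  symm := by
    constructor
    intro a b h
    try dsimp only at h ⊢
    rw [abs_sub_comm (b.1 : ℤ) (a.1 : ℤ), abs_sub_comm (b.2.1 : ℤ) (a.2.1 : ℤ)]
    exact h
  loopless := by constructor; intro a h; simp at h

/-- The snake enumeration of `ℕ × {0,1}`, 0-indexed: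
`v₁ = (0,0), v₂ = (0,1), v₃ = (1,1), v₄ = (1,0), v₅ = (2,0), v₆ = (2,1), …` -/
def snake (n : ℕ) : ℕ × Fin 2 :=
  (n / 2, if n % 4 = 1 ∨ n % 4 = 2 then 1 else 0)

noncomputable section
open Classical

namespace SnakeAux

noncomputable def snakeInv (p : ℕ × Fin 2) : ℕ :=
  2 * p.1 + (if (p.1 % 2 = 0) = (p.2 = 1) then 1 else 0)

lemma adj_iff (a b : ℕ × Fin 2) : ladderGraph.Adj a b ↔
    (a.1 = b.1 ∧ a.2 ≠ b.2) ∨ (a.2 = b.2 ∧ (a.1 = b.1 + 1 ∨ b.1 = a.1 + 1)) := by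
  rcases a with ⟨m, i⟩; rcases b with ⟨n, j⟩
  fin_cases i <;> fin_cases j <;>
    simp [ladderGraph, abs_eq, abs_eq_zero, sub_eq_zero] <;> omega

lemma snakeInv_snake (n : ℕ) : snakeInv (snake n) = n := by
  unfold snakeInv snake
  by_cases hp : n % 4 = 1 ∨ n % 4 = 2
  · simp only [if_pos hp]
    by_cases he : n / 2 % 2 = 0
    · rw [if_pos (by simp [he])]; omega
    · rw [if_neg (by simp [he])]; omega
  · simp only [if_neg hp]
    by_cases he : n / 2 % 2 = 0
    · rw [if_neg (by simp [he])]; omega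
    · rw [if_pos (by simp [he])]; omega

lemma snake_snakeInv (p : ℕ × Fin 2) : snake (snakeInv p) = p := by
  rcases p with ⟨m, i⟩
  fin_cases i
  · show snake (snakeInv (m, (0:Fin 2))) = (m, (0:Fin 2))
    by_cases hm : m % 2 = 0
    · have h : snakeInv (m, 0) = 2 * m := by
        unfold snakeInv; simp [hm]
      rw [h]; unfold snake
      rw [if_neg (by omega), (by omega : 2 * m / 2 = m)]
    · have h : snakeInv (m, 0) = 2 * m + 1 := by
        unfold snakeInv; simp [hm]
      rw [h]; unfold snake
      rw [if_neg (by omega), (by omega : (2 * m + 1) / 2 = m)]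
  · show snake (snakeInv (m, (1:Fin 2))) = (m, (1:Fin 2))
    by_cases hm : m % 2 = 0
    · have h : snakeInv (m, 1) = 2 * m + 1 := by
        unfold snakeInv; simp [hm]
      rw [h]; unfold snake
      rw [if_pos (by omega), (by omega : (2 * m + 1) / 2 = m)]
    · have h : snakeInv (m, 1) = 2 * m := by
        unfold snakeInv; simp [hm]
      rw [h]; unfold snake
      rw [if_pos (by omega), (by omega : 2 * m / 2 = m)]

lemma snake_injective : Function.Injective snake :=
  Function.LeftInverse.injective snakeInv_snake

lemma snakeInv_injective : Function.Injective snakeInv :=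
  Function.LeftInverse.injective snake_snakeInv

abbrev V := ℕ × Fin 2

lemma fin2_other_ne : ∀ j : Fin 2, (1 - j) ≠ j := by decide
lemma fin2_eq_of_ne : ∀ i j : Fin 2, i ≠ j → i = 1 - j := by decide
lemma fin2_succ_of_ne : ∀ i j : Fin 2, j ≠ i → j = i + 1 := by decide

lemma adj_vert (m : ℕ) (j : Fin 2) : ladderGraph.Adj (m, j) (m, 1 - j) := by
  rw [adj_iff]; exact Or.inl ⟨rfl, (fin2_other_ne j).symm⟩

lemma adj_horiz (m : ℕ) (j : Fin 2) : ladderGraph.Adj (m, j) (m + 1, j) := by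
  rw [adj_iff]; exact Or.inr ⟨rfl, Or.inr rfl⟩

lemma adj_idx {a b : V} (h : ladderGraph.Adj a b) :
    (snakeInv b = snakeInv a + 1 ∨ snakeInv a = snakeInv b + 1) ∨
    ((snakeInv b = snakeInv a + 3 ∧ Even (snakeInv a)) ∨
      (snakeInv a = snakeInv b + 3 ∧ Even (snakeInv b))) := by
  rcases a with ⟨m, i⟩; rcases b with ⟨n, j⟩
  rw [adj_iff] at h
  fin_cases i <;> fin_cases j <;> unfold snakeInv <;>
    simp_all [Nat.even_iff] <;> split_ifs <;> simp_all <;> omega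

def Cross (A : Set V) (e : Sym2 V) : Prop :=
  ∃ u w, e = s(u, w) ∧ ladderGraph.Adj u w ∧ u ∈ A ∧ w ∉ A

lemma exists_max_col (A : Set V) (hA : A.Finite) (hne : A.Nonempty) :
    ∃ M j, (M, j) ∈ A ∧ ∀ p ∈ A, p.1 ≤ M := by
  classical
  have hne' : (hA.toFinset.image Prod.fst).Nonempty := by
    simpa using (Set.Finite.toFinset_nonempty hA).2 hne
  have hmem := (hA.toFinset.image Prod.fst).max'_mem hne'
  rw [Finset.mem_image] at hmem
  obtain ⟨p, hp, hpM⟩ := hmem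
  refine ⟨p.1, p.2, by simpa using hp, ?_⟩
  intro q hq
  rw [hpM]
  exact Finset.le_max' _ _ (Finset.mem_image_of_mem Prod.fst (hA.mem_toFinset.2 hq))

lemma cross_structure (A : Set V) (hA : A.Finite) (hne : A.Nonempty) :
    ∃ e₁ e₂, e₁ ≠ e₂ ∧ Cross A e₁ ∧ Cross A e₂ ∧
      ((∃ e₃, e₃ ≠ e₁ ∧ e₃ ≠ e₂ ∧ Cross A e₃) ∨
        (∃ M, A = Set.Iic M ×ˢ Set.univ) ∨ (∃ p, A = {p})) := by
  classical
  obtain ⟨M, j, hMj, hbnd⟩ := exists_max_col A hA hne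
  have hout : ∀ i : Fin 2, (M + 1, i) ∉ A := fun i hc => by
    have := hbnd _ hc; simp only [] at this; omega
  by_cases ho : (M, 1 - j) ∈ A
  · -- both rows occupied in column M
    refine ⟨s((M, j), (M + 1, j)), s((M, 1 - j), (M + 1, 1 - j)), ?_, ?_, ?_, ?_⟩
    · intro hc
      rw [Sym2.eq_iff] at hc
      rcases hc with ⟨h1, _⟩ | ⟨h1, _⟩
      · exact fin2_other_ne j (congrArg Prod.snd h1).symm
      · have h2 := congrArg Prod.fst h1; simp only [] at h2; omega
    · exact ⟨_, _, rfl, adj_horiz M j, hMj, hout j⟩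
    · exact ⟨_, _, rfl, adj_horiz M (1 - j), ho, hout (1 - j)⟩
    by_cases h3 : ∃ e₃, e₃ ≠ s((M, j), (M + 1, j)) ∧
        e₃ ≠ s((M, 1 - j), (M + 1, 1 - j)) ∧ Cross A e₃
    · exact Or.inl h3
    push_neg at h3
    right; left
    refine ⟨M, ?_⟩
    have blocked : ∀ e, Cross A e → e = s((M, j), (M + 1, j)) ∨
        e = s((M, 1 - j), (M + 1, 1 - j)) := by
      intro e he
      by_contra hc
      push_neg at hc
      exact h3 e hc.1 hc.2 he
    have claim : ∀ d m, m + d = M → ((m, j) ∈ A ∧ (m, 1 - j) ∈ A) := by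
      intro d
      induction d with
      | zero => intro m hm; rw [Nat.add_zero] at hm; subst hm; exact ⟨hMj, ho⟩
      | succ d ih =>
        intro m hm
        have hih := ih (m + 1) (by omega)
        have hstep : ∀ i : Fin 2, (m + 1, i) ∈ A → (m, i) ∈ A := by
          intro i hin
          by_contra hno
          have hcr : Cross A s((m + 1, i), (m, i)) := by
            refine ⟨_, _, rfl, ?_, hin, hno⟩
            rw [adj_iff]; exact Or.inr ⟨rfl, Or.inl rfl⟩
          rcases blocked _ hcr with hc | hc <;> rw [Sym2.eq_iff] at hc <;>
            rcases hc with ⟨h1, h2⟩ | ⟨h1, h2⟩ <;>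
              rw [Prod.mk.injEq] at h1 h2 <;> omega
        exact ⟨hstep j hih.1, hstep (1 - j) hih.2⟩
    ext ⟨m, i⟩
    simp only [Set.mem_prod, Set.mem_Iic, Set.mem_univ, and_true]
    constructor
    · intro hin; exact hbnd _ hin
    · intro hm
      rcases eq_or_ne i j with rfl | hij
      · exact (claim (M - m) m (by omega)).1
      · rw [fin2_eq_of_ne i j hij]; exact (claim (M - m) m (by omega)).2
  · -- only row j occupied in column M
    refine ⟨s((M, j), (M + 1, j)), s((M, j), (M, 1 - j)), ?_, ?_, ?_, ?_⟩
    · intro hc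
      rw [Sym2.eq_iff] at hc
      rcases hc with ⟨h1, h2⟩ | ⟨h1, h2⟩
      · have h4 := congrArg Prod.fst h2; simp only [] at h4; omega
      · exact fin2_other_ne j (congrArg Prod.snd h1).symm
    · exact ⟨_, _, rfl, adj_horiz M j, hMj, hout j⟩
    · exact ⟨_, _, rfl, adj_vert M j, hMj, ho⟩
    by_cases h3 : ∃ e₃, e₃ ≠ s((M, j), (M + 1, j)) ∧
        e₃ ≠ s((M, j), (M, 1 - j)) ∧ Cross A e₃
    · exact Or.inl h3
    push_neg at h3
    have blocked : ∀ e, Cross A e → e = s((M, j), (M + 1, j)) ∨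
        e = s((M, j), (M, 1 - j)) := by
      intro e he
      by_contra hc
      push_neg at hc
      exact h3 e hc.1 hc.2 he
    rcases Nat.eq_zero_or_pos M with hM | hM
    · right; right
      refine ⟨(M, j), ?_⟩
      ext ⟨m, i⟩
      simp only [Set.mem_singleton_iff, Prod.mk.injEq]
      constructor
      · intro hin
        have h1 : m ≤ M := hbnd _ hin
        have h2 : m = M := by omega
        subst h2
        rcases eq_or_ne i j with rfl | hij
        · exact ⟨rfl, rfl⟩
        · exact absurd (fin2_eq_of_ne i j hij ▸ hin) ho
      · rintro ⟨rfl, rfl⟩; exact hMj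
    · exfalso
      obtain ⟨M', rfl⟩ : ∃ M', M = M' + 1 := ⟨M - 1, by omega⟩
      have h1 : (M', j) ∈ A := by
        by_contra hno
        have hcr : Cross A s((M' + 1, j), (M', j)) := by
          refine ⟨_, _, rfl, ?_, hMj, hno⟩
          rw [adj_iff]; exact Or.inr ⟨rfl, Or.inl rfl⟩
        rcases blocked _ hcr with hc | hc <;> rw [Sym2.eq_iff] at hc <;>
          rcases hc with ⟨hx, hy⟩ | ⟨hx, hy⟩ <;> rw [Prod.mk.injEq] at hx hy <;>
          first
            | omega
            | exact fin2_other_ne j hy.2.symm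
            | exact fin2_other_ne j hx.2.symm
      have h2 : (M', 1 - j) ∈ A := by
        by_contra hno
        have hcr : Cross A s((M', j), (M', 1 - j)) := ⟨_, _, rfl, adj_vert M' j, h1, hno⟩
        rcases blocked _ hcr with hc | hc <;> rw [Sym2.eq_iff] at hc <;>
          rcases hc with ⟨hx, hy⟩ | ⟨hx, hy⟩ <;> rw [Prod.mk.injEq] at hx hy <;>
          first
            | omega
            | exact fin2_other_ne j hy.2.symm
            | exact fin2_other_ne j hx.2.symm
      have hcr : Cross A s((M', 1 - j), (M' + 1, 1 - j)) :=
        ⟨_, _, rfl, adj_horiz M' (1 - j), h2, ho⟩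
      rcases blocked _ hcr with hc | hc <;> rw [Sym2.eq_iff] at hc <;>
        rcases hc with ⟨hx, hy⟩ | ⟨hx, hy⟩ <;> rw [Prod.mk.injEq] at hx hy <;>
        first
          | omega
          | exact fin2_other_ne j hx.2
          | exact fin2_other_ne j hy.2

lemma two_cross (A : Set V) (hA : A.Finite) (hne : A.Nonempty) :
    ∃ e₁ e₂, e₁ ≠ e₂ ∧ Cross A e₁ ∧ Cross A e₂ := by
  obtain ⟨e₁, e₂, h12, h1, h2, _⟩ := cross_structure A hA hne
  exact ⟨e₁, e₂, h12, h1, h2⟩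

lemma three_cross (A : Set V) (hA : A.Finite) (hodd : Odd A.ncard) (hne1 : A.ncard ≠ 1) :
    ∃ e₁ e₂ e₃, e₁ ≠ e₂ ∧ e₃ ≠ e₁ ∧ e₃ ≠ e₂ ∧ Cross A e₁ ∧ Cross A e₂ ∧ Cross A e₃ := by
  have hne : A.Nonempty := by
    rw [Set.nonempty_iff_ne_empty]
    rintro rfl
    simp [Set.ncard_empty] at hodd
  obtain ⟨e₁, e₂, h12, h1, h2, hrest⟩ := cross_structure A hA hne
  rcases hrest with ⟨e₃, h31, h32, h3⟩ | ⟨M, rfl⟩ | ⟨p, rfl⟩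
  · exact ⟨e₁, e₂, e₃, h12, h31, h32, h1, h2, h3⟩
  · exfalso
    have hcount : (Set.Iic M ×ˢ (Set.univ : Set (Fin 2))).ncard = (M + 1) * 2 := by
      have hcoe : Set.Iic M ×ˢ (Set.univ : Set (Fin 2)) =
          ↑((Finset.Iic M) ×ˢ (Finset.univ : Finset (Fin 2))) := by
        simp
      rw [hcoe, Set.ncard_coe_finset, Finset.card_product, Nat.card_Iic, Finset.card_univ,
        Fintype.card_fin]
    rw [hcount, Nat.odd_iff] at hodd
    omega
  · exact absurd (Set.ncard_singleton p) hne1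

lemma downset_eq_Iio {S : Set ℕ} (hS : S.Finite)
    (hdc : ∀ m n, m ≤ n → n ∈ S → m ∈ S) : S = Set.Iio S.ncard := by
  ext n
  simp only [Set.mem_Iio]
  constructor
  · intro hn
    have hsub : Set.Iic n ⊆ S := fun m hm => hdc m n hm hn
    have : (Set.Iic n).ncard ≤ S.ncard := Set.ncard_le_ncard hsub hS
    rw [show Set.Iic n = ↑(Finset.Iic n) from (Finset.coe_Iic n).symm,
      Set.ncard_coe_finset, Nat.card_Iic] at this
    omega
  · intro hn
    by_contra hns
    have hsub : S ⊆ Set.Iio n := by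
      intro k hk
      simp only [Set.mem_Iio]
      by_contra hkn
      push_neg at hkn
      exact hns (hdc n k hkn hk)
    have : S.ncard ≤ (Set.Iio n).ncard := Set.ncard_le_ncard hsub (Set.finite_Iio n)
    rw [show Set.Iio n = ↑(Finset.Iio n) from (Finset.coe_Iio n).symm,
      Set.ncard_coe_finset, Nat.card_Iio] at this
    omega

lemma cross_initial {N : ℕ} {e : Sym2 V} (h : Cross {p | snakeInv p < N} e) :
    e = s(snake (N - 1), snake N) ∨
      (Even N ∧ e = s(snake (N - 2), snake (N + 1))) ∨
      (¬Even N ∧ (e = s(snake (N - 1), snake (N + 2)) ∨ (3 ≤ N ∧ e = s(snake (N - 3), snake N)))) := by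
  obtain ⟨u, w, rfl, hadj, hu, hw⟩ := h
  simp only [Set.mem_setOf_eq] at hu hw
  push_neg at hw
  have hidx := adj_idx hadj
  rw [Nat.even_iff] at hidx
  rw [Nat.even_iff] at hidx
  have hu' : u = snake (snakeInv u) := (snake_snakeInv u).symm
  have hw' : w = snake (snakeInv w) := (snake_snakeInv w).symm
  rcases hidx with (hc | hc) | (⟨hc, hp⟩ | ⟨hc, hp⟩)
  · left
    rw [hu', hw', (by omega : snakeInv u = N - 1), (by omega : snakeInv w = N)]
  · omega
  · -- snakeInv w = snakeInv u + 3, snakeInv u even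
    by_cases hN : N % 2 = 0
    · right; left
      refine ⟨Nat.even_iff.mpr hN, ?_⟩
      rw [hu', hw', (by omega : snakeInv u = N - 2), (by omega : snakeInv w = N + 1)]
    · right; right
      refine ⟨fun he => hN (Nat.even_iff.mp he), ?_⟩
      rcases (by omega : snakeInv u = N - 1 ∨ snakeInv u + 3 = N) with h1 | h1
      · left
        rw [hu', hw', h1, (by omega : snakeInv w = N + 2)]
      · right
        refine ⟨by omega, ?_⟩
        rw [hu', hw', (by omega : snakeInv u = N - 3), (by omega : snakeInv w = N)]
  · omega

/-! ### Edge terms and finite reduction -/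

noncomputable def edgeTerm (f : V → ℝ) (e : Sym2 V) : ℝ :=
  Sym2.lift ⟨fun u w => |f u - f w|, fun u w => by dsimp only; rw [abs_sub_comm]⟩ e

lemma edgeTerm_mk (f : V → ℝ) (u w : V) : edgeTerm f s(u, w) = |f u - f w| := by
  simp [edgeTerm]

noncomputable def cut (f : V → ℝ) (t : ℝ) (e : Sym2 V) : ℝ :=
  Sym2.lift ⟨fun u w => |(if t < f u then (1:ℝ) else 0) - (if t < f w then (1:ℝ) else 0)|,
    fun u w => by dsimp only; rw [abs_sub_comm]⟩ e

lemma cut_mk (f : V → ℝ) (t : ℝ) (u w : V) :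
    cut f t s(u, w) = |(if t < f u then (1:ℝ) else 0) - (if t < f w then (1:ℝ) else 0)| := by
  simp [cut]

lemma cut_eq_indicator (a b t : ℝ) :
    |(if t < a then (1:ℝ) else 0) - (if t < b then (1:ℝ) else 0)|
      = Set.indicator (Set.Ico (min a b) (max a b)) (fun _ => (1:ℝ)) t := by
  rcases lt_or_ge t a with h1 | h1 <;> rcases lt_or_ge t b with h2 | h2
  · simp [Set.indicator_apply, Set.mem_Ico, min_le_iff, lt_max_iff, h1, h2, h1.not_ge, h2.not_ge]
  · simp [Set.indicator_apply, Set.mem_Ico, min_le_iff, lt_max_iff, h1, h2, h1.not_ge, h2.not_gt]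
  · simp [Set.indicator_apply, Set.mem_Ico, min_le_iff, lt_max_iff, h1, h2, h1.not_gt, h2.not_ge]
  · simp [Set.indicator_apply, Set.mem_Ico, min_le_iff, lt_max_iff, h1, h2, h1.not_gt, h2.not_gt]

lemma cut_integral (a b : ℝ) :
    (∫ t : ℝ, |(if t < a then (1:ℝ) else 0) - (if t < b then (1:ℝ) else 0)|) = |a - b| := by
  have h := fun t => cut_eq_indicator a b t
  rw [MeasureTheory.integral_congr_ae (Filter.Eventually.of_forall h),
    MeasureTheory.integral_indicator_const _ measurableSet_Ico, MeasureTheory.measureReal_def, Real.volume_Ico,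
    ENNReal.toReal_ofReal (by simp [min_le_max] : (0:ℝ) ≤ max a b - min a b)]
  rw [smul_eq_mul, mul_one, max_sub_min_eq_abs]
  exact abs_sub_comm b a

lemma cut_integrable (a b : ℝ) :
    MeasureTheory.Integrable
      (fun t : ℝ => |(if t < a then (1:ℝ) else 0) - (if t < b then (1:ℝ) else 0)|) := by
  have h : (fun t : ℝ => |(if t < a then (1:ℝ) else 0) - (if t < b then (1:ℝ) else 0)|)
      = Set.indicator (Set.Ico (min a b) (max a b)) (fun _ => (1:ℝ)) := funext (cut_eq_indicator a b)
  rw [h, MeasureTheory.integrable_indicator_iff measurableSet_Ico]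
  exact MeasureTheory.integrableOn_const (by rw [Real.volume_Ico]; exact ENNReal.ofReal_ne_top)

/-! ### A finite set of edges capturing everything -/

def nbrEdges (S : Finset V) : Finset (Sym2 V) :=
  S.biUnion (fun u => {s(u, (u.1 + 1, u.2)), s(u, (u.1 - 1, u.2)), s(u, (u.1, u.2 + 1))})

lemma mem_nbrEdges {S : Finset V} {u w : V} (hu : u ∈ S) (h : ladderGraph.Adj u w) :
    s(u, w) ∈ nbrEdges S := by
  rw [nbrEdges, Finset.mem_biUnion]
  refine ⟨u, hu, ?_⟩
  rw [adj_iff] at h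
  simp only [Finset.mem_insert, Finset.mem_singleton]
  rcases h with ⟨h1, h2⟩ | ⟨h1, h2⟩
  · right; right
    rw [show w = (u.1, u.2 + 1) from Prod.ext h1.symm (fin2_succ_of_ne u.2 w.2 (Ne.symm h2))]
  · rcases h2 with h2 | h2
    · right; left
      rw [show w = (u.1 - 1, u.2) from Prod.ext (by omega) h1.symm]
    · left
      rw [show w = (u.1 + 1, u.2) from Prod.ext (by omega) h1.symm]

noncomputable def bigEdges (S : Finset V) : Finset ladderGraph.edgeSet :=
  Finset.preimage (nbrEdges S) Subtype.val (Subtype.val_injective.injOn)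

lemma mem_bigEdges {S : Finset V} {u w : V} (h : ladderGraph.Adj u w)
    (huw : u ∈ S ∨ w ∈ S) (he : s(u, w) ∈ ladderGraph.edgeSet) :
    (⟨s(u, w), he⟩ : ladderGraph.edgeSet) ∈ bigEdges S := by
  rw [bigEdges, Finset.mem_preimage]
  show s(u, w) ∈ nbrEdges S
  rcases huw with hu | hw
  · exact mem_nbrEdges hu h
  · rw [Sym2.eq_swap]
    exact mem_nbrEdges hw h.symm

lemma cut_nonneg (f : V → ℝ) (t : ℝ) (e : Sym2 V) : 0 ≤ cut f t e := by
  induction e using Sym2.inductionOn with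
  | hf u w => rw [cut_mk]; exact abs_nonneg _

lemma cut_le_one (f : V → ℝ) (t : ℝ) (e : Sym2 V) : cut f t e ≤ 1 := by
  induction e using Sym2.inductionOn with
  | hf u w => rw [cut_mk]; split_ifs <;> norm_num

lemma cut_eq_one_of_ne (f : V → ℝ) (t : ℝ) (e : Sym2 V) (h : cut f t e ≠ 0) :
    cut f t e = 1 := by
  induction e using Sym2.inductionOn with
  | hf u w => rw [cut_mk] at h ⊢; split_ifs at h ⊢ <;> simp_all

lemma cross_of_cut_ne {f : V → ℝ} {t : ℝ} {e : Sym2 V} (he : e ∈ ladderGraph.edgeSet)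
    (h : cut f t e ≠ 0) : Cross {x | t < f x} e := by
  induction e using Sym2.inductionOn with
  | hf u w =>
    rw [SimpleGraph.mem_edgeSet] at he
    rw [cut_mk] at h
    split_ifs at h with h1 h2 h2
    · simp at h
    · exact ⟨u, w, rfl, he, h1, h2⟩
    · exact ⟨w, u, Sym2.eq_swap, he.symm, h2, h1⟩
    · simp at h
lemma cut_ne_of_cross {f : V → ℝ} {t : ℝ} {e : Sym2 V}
    (h : Cross {x | t < f x} e) : cut f t e ≠ 0 := by
  obtain ⟨u, w, rfl, hadj, hu, hw⟩ := h
  simp only [Set.mem_setOf_eq] at hu hw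
  rw [cut_mk, if_pos hu, if_neg hw]
  norm_num

lemma two_vertex_boundary (A : Set V) (hA : A.Finite) (hne : A.Nonempty) :
    ∃ u₁ u₂ w₁ w₂, u₁ ∈ A ∧ u₂ ∈ A ∧ w₁ ∉ A ∧ w₂ ∉ A ∧ w₁ ≠ w₂ ∧
      ladderGraph.Adj u₁ w₁ ∧ ladderGraph.Adj u₂ w₂ := by
  obtain ⟨M, j, hMj, hbnd⟩ := exists_max_col A hA hne
  have hout : ∀ i : Fin 2, (M + 1, i) ∉ A := fun i hc => by
    have := hbnd _ hc; simp only [] at this; omega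
  by_cases ho : (M, 1 - j) ∈ A
  · refine ⟨(M, j), (M, 1 - j), (M + 1, j), (M + 1, 1 - j), hMj, ho, hout j, hout (1 - j),
      ?_, adj_horiz M j, adj_horiz M (1 - j)⟩
    intro hc
    exact fin2_other_ne j (congrArg Prod.snd hc).symm
  · refine ⟨(M, j), (M, j), (M + 1, j), (M, 1 - j), hMj, hMj, hout j, ho, ?_,
      adj_horiz M j, adj_vert M j⟩
    intro hc
    have := congrArg Prod.fst hc
    simp only [] at this
    omega

/-! ### Pointwise level comparison -/

lemma sum_cut_eq_card (h : V → ℝ) (t : ℝ) (Ω : Finset ladderGraph.edgeSet) :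
    ∑ e ∈ Ω, cut h t e.1 = ((Ω.filter fun e => cut h t e.1 ≠ 0).card : ℝ) := by
  classical
  rw [← Finset.sum_filter_ne_zero]
  rw [Finset.card_eq_sum_ones]
  push_cast
  refine Finset.sum_congr rfl ?_
  intro e he
  exact cut_eq_one_of_ne h t e.1 (Finset.mem_filter.1 he).2

lemma card_le_two_of_subset_pair {α : Type*} [DecidableEq α] {s : Finset α} {a b : α}
    (h : s ⊆ {a, b}) : s.card ≤ 2 := by
  calc s.card ≤ ({a, b} : Finset α).card := Finset.card_le_card h
    _ ≤ 1 + 1 := by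
        refine le_trans (Finset.card_insert_le a {b}) ?_
        simp
    _ = 2 := rfl

lemma card_le_three_of_subset_triple {α : Type*} [DecidableEq α] {s : Finset α} {a b c : α}
    (h : s ⊆ {a, b, c}) : s.card ≤ 3 := by
  calc s.card ≤ ({a, b, c} : Finset α).card := Finset.card_le_card h
    _ ≤ 3 := by
        refine le_trans (Finset.card_insert_le a {b, c}) ?_
        have := Finset.card_insert_le b ({c} : Finset α)
        simp only [Finset.card_singleton] at this ⊢
        omega

lemma pointwise_compare (f fstar : V → ℝ) (σ : Equiv.Perm V)
    (hσ : fstar = f ∘ σ)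
    (hmono : ∀ m n : ℕ, m ≤ n → fstar (snake n) ≤ fstar (snake m))
    (hpos : ∀ x, 0 ≤ f x)
    (hsupp : (Function.support f).Finite)
    (S₀ : Finset V)
    (hS : ∀ x, f x ≠ 0 → x ∈ S₀) (hS' : ∀ x, fstar x ≠ 0 → x ∈ S₀)
    (t : ℝ) :
    ∑ e ∈ bigEdges S₀, cut fstar t e.1 ≤ ∑ e ∈ bigEdges S₀, cut f t e.1 := by
  classical
  have hpos' : ∀ x, 0 ≤ fstar x := fun x => by rw [hσ]; exact hpos (σ x)
  rcases lt_or_ge t 0 with ht | ht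
  · -- t < 0 : both sides vanish
    have hzero : ∀ (h : V → ℝ), (∀ x, 0 ≤ h x) → ∀ e : Sym2 V, cut h t e = 0 := by
      intro h hp e
      induction e using Sym2.inductionOn with
      | hf u w =>
        rw [cut_mk, if_pos (lt_of_lt_of_le ht (hp u)), if_pos (lt_of_lt_of_le ht (hp w)),
          sub_self, abs_zero]
    have h1 : ∑ e ∈ bigEdges S₀, cut fstar t e.1 = 0 :=
      Finset.sum_eq_zero fun e _ => hzero fstar hpos' e.1
    have h2 : ∑ e ∈ bigEdges S₀, cut f t e.1 = 0 :=
      Finset.sum_eq_zero fun e _ => hzero f hpos e.1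
    rw [h1, h2]
  · -- t ≥ 0
    set A : Set V := {x | t < f x} with hA
    set As : Set V := {x | t < fstar x} with hAs
    have hAfin : A.Finite := by
      refine Set.Finite.subset hsupp ?_
      intro x hx
      exact ne_of_gt (lt_of_le_of_lt ht hx)
    have hAsfin : As.Finite := by
      refine Set.Finite.subset (S₀.finite_toSet) ?_
      intro x hx
      exact hS' x (ne_of_gt (lt_of_le_of_lt ht hx))
    have hAS : ∀ x ∈ A, x ∈ S₀ := fun x hx => hS x (ne_of_gt (lt_of_le_of_lt ht hx))
    have hAsS : ∀ x ∈ As, x ∈ S₀ := fun x hx => hS' x (ne_of_gt (lt_of_le_of_lt ht hx))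
    set N := A.ncard with hN
    -- the rearranged level set is the initial segment of length N
    have hcard : As.ncard = N := by
      have him : σ '' As = A := by
        ext x
        constructor
        · rintro ⟨y, hy, rfl⟩
          rw [hAs, Set.mem_setOf_eq, hσ] at hy
          exact hy
        · intro hx
          refine ⟨σ.symm x, ?_, by simp⟩
          rw [hAs, Set.mem_setOf_eq, hσ]
          simpa [hA] using hx
      rw [hN, ← him, Set.ncard_image_of_injective As σ.injective]
    have hseg : As = {p | snakeInv p < N} := by
      set S : Set ℕ := {n | t < fstar (snake n)} with hSdef
      have hSfin : S.Finite := by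
        have : S = snake ⁻¹' As := rfl
        rw [this]
        exact Set.Finite.preimage (snake_injective.injOn) hAsfin
      have hdc : ∀ m n, m ≤ n → n ∈ S → m ∈ S := fun m n hmn hn =>
        lt_of_lt_of_le hn (hmono m n hmn)
      have hIio := downset_eq_Iio hSfin hdc
      have hchar : As = {p | snakeInv p ∈ S} := by
        ext p
        rw [hAs, Set.mem_setOf_eq, Set.mem_setOf_eq, hSdef, Set.mem_setOf_eq, snake_snakeInv]
      have himg : snake '' S = As := by
        ext p
        constructor
        · rintro ⟨n, hn, rfl⟩
          rw [hchar, Set.mem_setOf_eq, snakeInv_snake]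
          exact hn
        · intro hp
          rw [hchar, Set.mem_setOf_eq] at hp
          exact ⟨snakeInv p, hp, snake_snakeInv p⟩
      have hScard : S.ncard = N := by
        rw [← hcard, ← himg, Set.ncard_image_of_injective S snake_injective]
      rw [hchar, hIio, hScard]
      rfl
    -- counting
    set Bf := (bigEdges S₀).filter (fun e => cut f t e.1 ≠ 0) with hBf
    set Bs := (bigEdges S₀).filter (fun e => cut fstar t e.1 ≠ 0) with hBs
    rw [sum_cut_eq_card f t, sum_cut_eq_card fstar t]
    rw [← hBf, ← hBs]
    rw [Nat.cast_le]
    -- every member of Bs is a crossing edge of the initial segment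
    have hBsCross : ∀ e ∈ Bs, Cross {p | snakeInv p < N} e.1 := by
      intro e he
      rw [hBs, Finset.mem_filter] at he
      rw [← hseg]
      exact cross_of_cut_ne e.2 he.2
    -- every crossing edge of A is in Bf
    have hCrossBf : ∀ e : Sym2 V, Cross A e → ∃ he : e ∈ ladderGraph.edgeSet,
        (⟨e, he⟩ : ladderGraph.edgeSet) ∈ Bf := by
      rintro e ⟨u, w, rfl, hadj, hu, hw⟩
      have he : s(u, w) ∈ ladderGraph.edgeSet := by
        rw [SimpleGraph.mem_edgeSet]; exact hadj
      refine ⟨he, ?_⟩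
      rw [hBf, Finset.mem_filter]
      exact ⟨mem_bigEdges hadj (Or.inl (hAS u hu)) he,
        cut_ne_of_cross ⟨u, w, rfl, hadj, hu, hw⟩⟩
    rcases Nat.eq_zero_or_pos N with hN0 | hNpos
    · -- N = 0 : no crossing edges at all for fstar
      have : Bs = ∅ := by
        rw [Finset.eq_empty_iff_forall_notMem]
        intro e he
        obtain ⟨u, w, _, _, hu, _⟩ := hBsCross e he
        rw [Set.mem_setOf_eq, hN0] at hu
        omega
      rw [this]
      simp
    · -- N ≥ 1
      have hAne : A.Nonempty := (Set.ncard_pos hAfin).mp (hN ▸ hNpos)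
      -- upper bound for Bs via candidates
      have hBsImage : Bs.card = (Bs.image Subtype.val).card :=
        (Finset.card_image_of_injective Bs Subtype.val_injective).symm
      by_cases hpar : Even N
      · -- even: at most 2 candidates, at least 2 crossing edges
        have hup : Bs.card ≤ 2 := by
          rw [hBsImage]
          refine card_le_two_of_subset_pair (a := s(snake (N - 1), snake N))
            (b := s(snake (N - 2), snake (N + 1))) ?_
          intro e he
          rw [Finset.mem_image] at he
          obtain ⟨e', he', rfl⟩ := he
          rcases cross_initial (hBsCross e' he') with h1 | ⟨_, h1⟩ | ⟨hodd, _⟩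
          · simp [h1]
          · simp [h1]
          · exact absurd hpar hodd
        obtain ⟨e₁, e₂, h12, hc1, hc2⟩ := two_cross A hAfin hAne
        obtain ⟨he₁, hm₁⟩ := hCrossBf e₁ hc1
        obtain ⟨he₂, hm₂⟩ := hCrossBf e₂ hc2
        have hlow := Finset.one_lt_card.2
          ⟨_, hm₁, _, hm₂, fun hc => h12 (congrArg Subtype.val hc)⟩
        omega
      · -- odd
        rcases eq_or_ne N 1 with hN1 | hN1
        · -- N = 1 : at most 2 candidates still
          have hup : Bs.card ≤ 2 := by
            rw [hBsImage]
            refine card_le_two_of_subset_pair (a := s(snake (N - 1), snake N))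
              (b := s(snake (N - 1), snake (N + 2))) ?_
            intro e he
            rw [Finset.mem_image] at he
            obtain ⟨e', he', rfl⟩ := he
            rcases cross_initial (hBsCross e' he') with h1 | ⟨hev, _⟩ | ⟨_, h1 | ⟨h3, _⟩⟩
            · simp [h1]
            · exact absurd hev hpar
            · simp [h1]
            · omega
          obtain ⟨e₁, e₂, h12, hc1, hc2⟩ := two_cross A hAfin hAne
          obtain ⟨he₁, hm₁⟩ := hCrossBf e₁ hc1
          obtain ⟨he₂, hm₂⟩ := hCrossBf e₂ hc2
          have hlow := Finset.one_lt_card.2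
            ⟨_, hm₁, _, hm₂, fun hc => h12 (congrArg Subtype.val hc)⟩
          omega
        · -- N odd, N ≥ 3
          have hup : Bs.card ≤ 3 := by
            rw [hBsImage]
            refine card_le_three_of_subset_triple (a := s(snake (N - 1), snake N))
              (b := s(snake (N - 1), snake (N + 2))) (c := s(snake (N - 3), snake N)) ?_
            intro e he
            rw [Finset.mem_image] at he
            obtain ⟨e', he', rfl⟩ := he
            rcases cross_initial (hBsCross e' he') with h1 | ⟨hev, _⟩ | ⟨_, h1 | ⟨_, h1⟩⟩
            · simp [h1]
            · exact absurd hev hpar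
            · simp [h1]
            · simp [h1]
          obtain ⟨e₁, e₂, e₃, h12, h31, h32, hc1, hc2, hc3⟩ :=
            three_cross A hAfin (Nat.not_even_iff_odd.1 hpar) hN1
          obtain ⟨he₁, hm₁⟩ := hCrossBf e₁ hc1
          obtain ⟨he₂, hm₂⟩ := hCrossBf e₂ hc2
          obtain ⟨he₃, hm₃⟩ := hCrossBf e₃ hc3
          have hlow : 2 < Bf.card := by
            rw [Finset.two_lt_card]
            refine ⟨_, hm₁, _, hm₂, _, hm₃, ?_, ?_, ?_⟩ <;>
              intro hc <;>
              first
                | exact h12 (congrArg Subtype.val hc)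
                | exact h31 (congrArg Subtype.val hc).symm
                | exact h32 (congrArg Subtype.val hc).symm
          omega

/-! ### gradL1 as a finite sum and as an integral -/

lemma edgeTerm_mem_nbr (f : V → ℝ) (S₀ : Finset V) (hS : ∀ x, f x ≠ 0 → x ∈ S₀) :
    ∀ e : Sym2 V, e ∈ ladderGraph.edgeSet → edgeTerm f e ≠ 0 → e ∈ nbrEdges S₀ := by
  intro e
  induction e using Sym2.inductionOn with
  | hf u w =>
    intro hes h0
    rw [SimpleGraph.mem_edgeSet] at hes
    rw [edgeTerm_mk] at h0
    have hne : f u ≠ f w := fun hc => h0 (by rw [hc, sub_self, abs_zero])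
    rcases eq_or_ne (f u) 0 with hu | hu
    · have hw : f w ≠ 0 := fun hc => hne (by rw [hu, hc])
      rw [Sym2.eq_swap]
      exact mem_nbrEdges (hS w hw) hes.symm
    · exact mem_nbrEdges (hS u hu) hes

lemma gradL1_eq_sum (f : V → ℝ) (S₀ : Finset V) (hS : ∀ x, f x ≠ 0 → x ∈ S₀) :
    gradL1 ladderGraph f = ∑ e ∈ bigEdges S₀, edgeTerm f e.1 := by
  have hdef : gradL1 ladderGraph f = ∑' e : ladderGraph.edgeSet, edgeTerm f e.1 := rfl
  rw [hdef]
  refine tsum_eq_sum ?_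
  intro e he
  by_contra h0
  apply he
  rw [bigEdges, Finset.mem_preimage]
  exact edgeTerm_mem_nbr f S₀ hS e.1 e.2 h0

lemma edgeTerm_eq_integral (f : V → ℝ) (e : Sym2 V) :
    edgeTerm f e = ∫ t : ℝ, cut f t e := by
  induction e using Sym2.inductionOn with
  | hf u w =>
    rw [edgeTerm_mk]
    simp only [cut_mk]
    exact (cut_integral (f u) (f w)).symm

lemma cut_integrable' (f : V → ℝ) (e : Sym2 V) :
    MeasureTheory.Integrable (fun t : ℝ => cut f t e) := by
  induction e using Sym2.inductionOn with
  | hf u w =>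
    simp only [cut_mk]
    exact cut_integrable (f u) (f w)

/-! ### The L∞ part -/

lemma gradLinf_def (f : V → ℝ) :
    gradLinf ladderGraph f = ⨆ e : ladderGraph.edgeSet, edgeTerm f e.1 := rfl

lemma adj01 : ladderGraph.Adj ((0:ℕ), (0:Fin 2)) ((0:ℕ), (1:Fin 2)) := by
  rw [adj_iff]; left; exact ⟨rfl, by decide⟩

instance : Nonempty ladderGraph.edgeSet :=
  ⟨⟨s(((0:ℕ), (0:Fin 2)), ((0:ℕ), (1:Fin 2))), by rw [SimpleGraph.mem_edgeSet]; exact adj01⟩⟩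

lemma abs_le_suppSum (f : V → ℝ) (hsupp : (Function.support f).Finite) (x : V) :
    |f x| ≤ ∑ y ∈ hsupp.toFinset, |f y| := by
  by_cases hx : x ∈ hsupp.toFinset
  · exact Finset.single_le_sum (fun y _ => abs_nonneg (f y)) hx
  · have : f x = 0 := by
      by_contra h
      exact hx (hsupp.mem_toFinset.2 h)
    rw [this, abs_zero]
    exact Finset.sum_nonneg fun y _ => abs_nonneg (f y)

lemma bddAbove_edgeTerm (f : V → ℝ) (C : ℝ) (hC : ∀ x, |f x| ≤ C) :
    BddAbove (Set.range fun e : ladderGraph.edgeSet => edgeTerm f e.1) := by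
  refine ⟨2 * C, ?_⟩
  rintro _ ⟨e, rfl⟩
  rcases e with ⟨e, he⟩
  induction e using Sym2.inductionOn with
  | hf u w =>
    show edgeTerm f s(u, w) ≤ 2 * C
    rw [edgeTerm_mk, sub_eq_add_neg]
    refine le_trans (abs_add_le _ _) ?_
    rw [abs_neg]
    linarith [hC u, hC w]

lemma linf_part (f fstar : V → ℝ) (σ : Equiv.Perm V) (hσ : fstar = f ∘ σ)
    (hmono : ∀ m n : ℕ, m ≤ n → fstar (snake n) ≤ fstar (snake m))
    (hsupp : (Function.support f).Finite) :
    gradLinf ladderGraph fstar ≤ 2 * gradLinf ladderGraph f := by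
  classical
  set C := ∑ y ∈ hsupp.toFinset, |f y| with hCdef
  have hCf : ∀ x, |f x| ≤ C := abs_le_suppSum f hsupp
  have hCfs : ∀ x, |fstar x| ≤ C := fun x => by rw [hσ]; exact hCf (σ x)
  have hbddf := bddAbove_edgeTerm f C hCf
  have hbddfs := bddAbove_edgeTerm fstar C hCfs
  -- any edge difference of f is at most gradLinf f
  have hterm : ∀ u w : V, ladderGraph.Adj u w → |f u - f w| ≤ gradLinf ladderGraph f := by
    intro u w h
    have he : s(u, w) ∈ ladderGraph.edgeSet := by rw [SimpleGraph.mem_edgeSet]; exact h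
    have := le_ciSup hbddf (⟨s(u, w), he⟩ : ladderGraph.edgeSet)
    rw [edgeTerm_mk] at this
    rw [gradLinf_def]
    exact this
  have hsup0 : 0 ≤ gradLinf ladderGraph f := by
    refine le_trans (abs_nonneg (f ((0:ℕ), (0:Fin 2)) - f ((0:ℕ), (1:Fin 2)))) ?_
    exact hterm _ _ adj01
  set g : ℕ → ℝ := fun n => fstar (snake n) with hg
  have hganti : ∀ m n : ℕ, m ≤ n → g n ≤ g m := hmono
  set X : ℕ → V := fun j => σ (snake j) with hX
  have hfX : ∀ j, f (X j) = g j := fun j => by rw [hg, hσ]; rfl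
  have hXinj : Function.Injective X := σ.injective.comp snake_injective
  -- the gap lemma
  have gap : ∀ k d : ℕ, d ≤ 2 → g k - g (k + d) ≤ gradLinf ladderGraph f := by
    intro k d hd
    rcases le_or_gt (g k) (g (k + d)) with hlt | hlt
    · linarith
    set A : Set V := X '' (Set.Iic k) with hAdef
    have hAfin : A.Finite := (Set.finite_Iic k).image X
    have hAne : A.Nonempty := ⟨X k, k, Set.self_mem_Iic, rfl⟩
    have hAcard : A.ncard = k + 1 := by
      rw [hAdef, Set.ncard_image_of_injective _ hXinj,
        show Set.Iic k = ↑(Finset.Iic k) from (Finset.coe_Iic k).symm,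
        Set.ncard_coe_finset, Nat.card_Iic]
    have hAval : ∀ x ∈ A, g k ≤ f x := by
      rintro x ⟨j, hj, rfl⟩
      rw [hfX]
      exact hganti j k hj
    set D : Set V := {x | g (k + d) < f x} with hDdef
    have hAD : A ⊆ D := fun x hx => lt_of_lt_of_le hlt (hAval x hx)
    have hDsub : D ⊆ X '' (Set.Iio (k + d)) := by
      intro x hx
      have hxX : X (snakeInv (σ.symm x)) = x := by
        rw [hX]
        show σ (snake (snakeInv (σ.symm x))) = x
        rw [snake_snakeInv]
        simp
      refine ⟨snakeInv (σ.symm x), ?_, hxX⟩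
      rw [Set.mem_Iio]
      by_contra hn
      push_neg at hn
      have := hganti (k + d) _ hn
      rw [← hfX, hxX] at this
      rw [hDdef, Set.mem_setOf_eq] at hx
      linarith
    have hDfin : D.Finite := Set.Finite.subset ((Set.finite_Iio (k + d)).image X) hDsub
    have hDcard : D.ncard ≤ k + d := by
      refine le_trans (Set.ncard_le_ncard hDsub ((Set.finite_Iio (k + d)).image X)) ?_
      rw [Set.ncard_image_of_injective _ hXinj,
        show Set.Iio (k + d) = ↑(Finset.Iio (k + d)) from (Finset.coe_Iio (k + d)).symm,
        Set.ncard_coe_finset, Nat.card_Iio]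
    obtain ⟨u₁, u₂, w₁, w₂, hu₁, hu₂, hw₁, hw₂, hww, ha₁, ha₂⟩ :=
      two_vertex_boundary A hAfin hAne
    have hWD : w₁ ∉ D ∨ w₂ ∉ D := by
      by_contra hc
      push_neg at hc
      have hsub : insert w₁ (insert w₂ A) ⊆ D := by
        rw [Set.insert_subset_iff, Set.insert_subset_iff]
        exact ⟨hc.1, hc.2, hAD⟩
      have hcard2 : (insert w₁ (insert w₂ A)).ncard = k + 3 := by
        rw [Set.ncard_insert_of_notMem (by
            rw [Set.mem_insert_iff]
            push_neg
            exact ⟨hww, hw₁⟩) ((hAfin.insert w₂)),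
          Set.ncard_insert_of_notMem hw₂ hAfin, hAcard]
      have := Set.ncard_le_ncard hsub hDfin
      omega
    have key : ∀ u w : V, u ∈ A → w ∉ D → ladderGraph.Adj u w →
        g k - g (k + d) ≤ gradLinf ladderGraph f := by
      intro u w hu hw hadj
      have h1 : g k ≤ f u := hAval u hu
      have h2 : f w ≤ g (k + d) := by
        rw [hDdef, Set.mem_setOf_eq] at hw
        push_neg at hw
        exact hw
      calc g k - g (k + d) ≤ f u - f w := by linarith
        _ ≤ |f u - f w| := le_abs_self _
        _ ≤ gradLinf ladderGraph f := hterm u w hadj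
    rcases hWD with hw | hw
    · exact key u₁ w₁ hu₁ hw ha₁
    · exact key u₂ w₂ hu₂ hw ha₂
  -- conclude edge by edge
  rw [gradLinf_def]
  refine ciSup_le ?_
  rintro ⟨e, he⟩
  revert he
  induction e using Sym2.inductionOn with
  | hf u w =>
    intro he
    rw [SimpleGraph.mem_edgeSet] at he
    show edgeTerm fstar s(u, w) ≤ 2 * gradLinf ladderGraph f
    rw [edgeTerm_mk]
    have hu : fstar u = g (snakeInv u) := by
      show fstar u = fstar (snake (snakeInv u))
      rw [snake_snakeInv]
    have hw : fstar w = g (snakeInv w) := by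
      show fstar w = fstar (snake (snakeInv w))
      rw [snake_snakeInv]
    rw [hu, hw]
    have habs : ∀ a b : ℕ, a ≤ b → b ≤ a + 3 → |g a - g b| ≤ 2 * gradLinf ladderGraph f := by
      intro a b hab hab3
      rw [abs_of_nonneg (by linarith [hganti a b hab] : (0:ℝ) ≤ g a - g b)]
      have h1 : g a - g (a + 2) ≤ gradLinf ladderGraph f := gap a 2 le_rfl
      have h2 : g (a + 2) - g (a + 3) ≤ gradLinf ladderGraph f := by
        have := gap (a + 2) 1 (by norm_num)
        rwa [show a + 2 + 1 = a + 3 from rfl] at this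
      have h3 : g (a + 3) ≤ g b := hganti b (a + 3) hab3
      linarith
    rcases adj_idx he with (hc | hc) | (⟨hc, _⟩ | ⟨hc, _⟩)
    · exact habs (snakeInv u) (snakeInv w) (by omega) (by omega)
    · rw [abs_sub_comm]
      exact habs (snakeInv w) (snakeInv u) (by omega) (by omega)
    · exact habs (snakeInv u) (snakeInv w) (by omega) (by omega)
    · rw [abs_sub_comm]
      exact habs (snakeInv w) (snakeInv u) (by omega) (by omega)

end SnakeAux

/-- On the ladder graph, the snake rearrangement of a finitely
supported `f : ℕ×{0,1} → ℝ_{≥0}` satisfies `‖∇f*‖_{L¹} ≤ ‖∇f‖_{L¹}` and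
`‖∇f*‖_{L^∞} ≤ 2·‖∇f‖_{L^∞}`. -/
theorem snake_polya_szego (f fstar : ℕ × Fin 2 → ℝ)
    (hsupp : (Function.support f).Finite) (hpos : ∀ x, 0 ≤ f x)
    (hre : IsRearrangement snake f fstar) :
    gradL1 ladderGraph fstar ≤ gradL1 ladderGraph f ∧
      gradLinf ladderGraph fstar ≤ 2 * gradLinf ladderGraph f := by
  classical
  obtain ⟨⟨σ, hσ⟩, hmono⟩ := hre
  have hsupp' : (Function.support fstar).Finite := by
    rw [hσ, Function.support_comp_eq_preimage]
    exact Set.Finite.preimage (σ.injective.injOn) hsupp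
  set S₀ : Finset SnakeAux.V := hsupp.toFinset ∪ hsupp'.toFinset with hS₀
  have hS : ∀ x, f x ≠ 0 → x ∈ S₀ := fun x hx =>
    Finset.mem_union_left _ (hsupp.mem_toFinset.2 hx)
  have hS' : ∀ x, fstar x ≠ 0 → x ∈ S₀ := fun x hx =>
    Finset.mem_union_right _ (hsupp'.mem_toFinset.2 hx)
  constructor
  · rw [SnakeAux.gradL1_eq_sum f S₀ hS, SnakeAux.gradL1_eq_sum fstar S₀ hS']
    have hint : ∀ (h : SnakeAux.V → ℝ),
        ∑ e ∈ SnakeAux.bigEdges S₀, SnakeAux.edgeTerm h e.1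
          = ∫ t : ℝ, ∑ e ∈ SnakeAux.bigEdges S₀, SnakeAux.cut h t e.1 := by
      intro h
      rw [MeasureTheory.integral_finset_sum _ (fun e _ => SnakeAux.cut_integrable' h e.1)]
      exact Finset.sum_congr rfl fun e _ => SnakeAux.edgeTerm_eq_integral h e.1
    rw [hint f, hint fstar]
    refine MeasureTheory.integral_mono ?_ ?_ ?_
    · exact MeasureTheory.integrable_finset_sum _
        (fun e _ => SnakeAux.cut_integrable' fstar e.1)
    · exact MeasureTheory.integrable_finset_sum _
        (fun e _ => SnakeAux.cut_integrable' f e.1)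
    · intro t
      exact SnakeAux.pointwise_compare f fstar σ hσ (fun m n h => hmono m n h)
        hpos hsupp S₀ hS hS' t
  · exact SnakeAux.linf_part f fstar σ hσ (fun m n h => hmono m n h) hsupp
end
end

section
/- Let f : ℕ×{0,1} → ℝ_{≥0} be finitely supported on the ladder graph and let f* denote its rearrangement with respect to the lexicographic enumeration. Then ‖∇f*‖_{L¹} ≤ ‖∇f‖_{L¹} and ‖∇f*‖_{L^∞} ≤ ‖∇f‖_{L^∞}. -/
open Real

/-- The lexicographic enumeration of `ℕ × {0,1}`, 0-indexed:
`v₁ = (0,0), v₂ = (0,1), v₃ = (1,0), v₄ = (1,1), …` -/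
def lexEnum (n : ℕ) : ℕ × Fin 2 := (n / 2, ⟨n % 2, Nat.mod_lt n (by norm_num)⟩)



section PolyaSzegoAux

namespace LPS

abbrev V2 := ℕ × Fin 2

lemma ladder_adj_iff (a b : V2) : ladderGraph.Adj a b ↔
    ((a.2 = b.2 ∧ (a.1 = b.1 + 1 ∨ b.1 = a.1 + 1)) ∨ (a.1 = b.1 ∧ a.2 ≠ b.2)) := by
  obtain ⟨m, i⟩ := a
  obtain ⟨n, j⟩ := b
  show (|(m : ℤ) - n| + |(i.1 : ℤ) - j.1| = 1) ↔ _
  rw [Int.abs_eq_natAbs, Int.abs_eq_natAbs]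
  have hi := i.2
  have hj := j.2
  constructor
  · intro h
    simp only [Prod.mk.injEq, Fin.ext_iff, ne_eq]
    omega
  · intro h
    simp only [Prod.mk.injEq, Fin.ext_iff, ne_eq] at h
    omega

def lexE : ℕ ≃ V2 where
  toFun := lexEnum
  invFun v := 2 * v.1 + v.2.1
  left_inv n := by unfold lexEnum; simp; omega
  right_inv v := by
    obtain ⟨m, i⟩ := v
    have := i.2
    unfold lexEnum
    simp only [Prod.mk.injEq, Fin.ext_iff]
    omega

noncomputable def Dd (g : V2 → ℝ) : Sym2 V2 → ℝ :=
  Sym2.lift ⟨fun u w => |g u - g w|, fun u w => by dsimp only; rw [abs_sub_comm]⟩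

@[simp] lemma Dd_mk (g : V2 → ℝ) (u w : V2) : Dd g s(u, w) = |g u - g w| := rfl

lemma gradL1_eq_tsum (g : V2 → ℝ) : gradL1 ladderGraph g = ∑' e : ladderGraph.edgeSet, Dd g e.1 := rfl

def nbr (v : V2) : Finset V2 := {(v.1 + 1, v.2), (v.1 - 1, v.2), (v.1, v.2 + 1)}

lemma mem_nbr_of_adj {u w : V2} (h : ladderGraph.Adj u w) : w ∈ nbr u := by
  rw [ladder_adj_iff] at h
  obtain ⟨p, i⟩ := u
  obtain ⟨q, j⟩ := w
  simp only [Prod.mk.injEq, Fin.ext_iff, ne_eq] at h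
  have hi := i.2
  have hj := j.2
  simp only [nbr, Finset.mem_insert, Finset.mem_singleton, Prod.mk.injEq, Fin.ext_iff,
    Fin.val_add_one_of_lt] -- may not fire; fallback below
  rcases h with ⟨h2, h1 | h1⟩ | ⟨h1, h2⟩
  · right; left; omega
  · left; omega
  · right; right
    constructor
    · omega
    · show j.1 = (i + 1).1
      have : (i + 1).1 = (i.1 + 1) % 2 := rfl
      omega

instance : DecidableRel ladderGraph.Adj := fun a b =>
  inferInstanceAs (Decidable (|(a.1 : ℤ) - b.1| + |(a.2.1 : ℤ) - b.2.1| = 1))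

def EE (S : Finset V2) : Finset (Sym2 V2) :=
  (S.biUnion fun v => (nbr v).image fun w => s(v, w)).filter fun e => e ∈ ladderGraph.edgeSet

lemma edge_of_mem_EE {S : Finset V2} {e : Sym2 V2} (h : e ∈ EE S) : e ∈ ladderGraph.edgeSet :=
  (Finset.mem_filter.mp h).2

lemma mem_EE_of {S : Finset V2} {u w : V2} (hadj : ladderGraph.Adj u w) (hu : u ∈ S) :
    s(u, w) ∈ EE S := by
  refine Finset.mem_filter.mpr ⟨?_, hadj⟩
  exact Finset.mem_biUnion.mpr ⟨u, hu, Finset.mem_image.mpr ⟨w, mem_nbr_of_adj hadj, rfl⟩⟩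

lemma gradL1_eq_sum (g : V2 → ℝ) (S : Finset V2) (hS : ∀ v, g v ≠ 0 → v ∈ S) :
    gradL1 ladderGraph g = ∑ e ∈ EE S, Dd g e := by
  rw [gradL1_eq_tsum, tsum_subtype (ladderGraph.edgeSet) (Dd g)]
  rw [tsum_eq_sum (s := EE S)]
  · refine Finset.sum_congr rfl fun e he => Set.indicator_of_mem (edge_of_mem_EE he) _
  · intro e he
    by_cases hedge : e ∈ ladderGraph.edgeSet
    · rw [Set.indicator_of_mem hedge]
      induction e using Sym2.inductionOn with
      | hf u w =>
        rw [SimpleGraph.mem_edgeSet] at hedge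
        by_contra hne0
        have hne : g u ≠ g w := fun hgw => hne0 (by rw [Dd_mk, hgw, sub_self, abs_zero])
        have : u ∈ S ∨ w ∈ S := by
          rcases eq_or_ne (g u) 0 with h0 | h0
          · right; apply hS; rw [h0] at hne; exact (Ne.symm hne)
          · left; exact hS _ h0
        rcases this with h | h
        · exact he (mem_EE_of hedge h)
        · rw [Sym2.eq_swap] at he
          exact he (mem_EE_of hedge.symm h)
    · exact Set.indicator_of_notMem hedge _

end LPS

namespace LPS

variable {a : ℕ → ℝ} {K : ℕ}

noncomputable def indf (r : V2 → ℕ) (k : ℕ) (v : V2) : ℝ := if r v ≤ k then 1 else 0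

noncomputable def chi (r : V2 → ℕ) (k : ℕ) : Sym2 V2 → ℝ := Dd (indf r k)

lemma chi_mk (r : V2 → ℕ) (k : ℕ) (u w : V2) :
    chi r k s(u, w) = |indf r k u - indf r k w| := rfl

lemma chi_nonneg (r : V2 → ℕ) (k : ℕ) (e : Sym2 V2) : 0 ≤ chi r k e := by
  induction e using Sym2.inductionOn with
  | hf u w => rw [chi_mk]; exact abs_nonneg _

lemma chi_eq_one (r : V2 → ℕ) (k : ℕ) {u w : V2} (hu : r u ≤ k) (hw : ¬ r w ≤ k) :
    chi r k s(u, w) = 1 := by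
  rw [chi_mk]; unfold indf; rw [if_pos hu, if_neg hw]; norm_num

-- telescoping absolute-difference decomposition
lemma abs_sub_decomp (ha : Antitone a) (haK : ∀ k, K ≤ k → a k = 0)
    {i j : ℕ} (hij : i < j) :
    |a i - a j| = ∑ k ∈ Finset.range K, (a k - a (k + 1)) *
      (if (i ≤ k ∧ ¬ j ≤ k) ∨ (j ≤ k ∧ ¬ i ≤ k) then 1 else 0) := by
  have key : ∀ k ∈ Finset.range K, (a k - a (k + 1)) *
      (if (i ≤ k ∧ ¬ j ≤ k) ∨ (j ≤ k ∧ ¬ i ≤ k) then 1 else 0)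
      = if i ≤ k ∧ k < j then a k - a (k + 1) else 0 := by
    intro k _
    by_cases h : i ≤ k ∧ k < j
    · rw [if_pos h, if_pos, mul_one]
      exact Or.inl ⟨h.1, by omega⟩
    · rw [if_neg h, if_neg, mul_zero]
      omega
  rw [Finset.sum_congr rfl key, Finset.sum_ite, Finset.sum_const_zero, add_zero]
  have hfil : (Finset.range K).filter (fun k => i ≤ k ∧ k < j) = Finset.Ico i (min j K) := by
    ext k
    simp only [Finset.mem_filter, Finset.mem_range, Finset.mem_Ico]
    omega
  rw [hfil]
  have hmin : a (min j K) = a j := by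
    rcases le_total j K with h | h
    · rw [min_eq_left h]
    · rw [min_eq_right h, haK _ le_rfl, haK _ h]
  rcases le_or_gt i (min j K) with him | him
  · rw [Finset.sum_Ico_eq_sub _ him, Finset.sum_range_sub' a, Finset.sum_range_sub' a]
    rw [abs_of_nonneg (by linarith [ha hij.le] : (0:ℝ) ≤ a i - a j)]
    rw [hmin]; ring
  · have hiK : K ≤ i := by omega
    rw [Finset.Ico_eq_empty (by omega), Finset.sum_empty, haK _ hiK, haK _ (by omega : K ≤ j)]
    simp

lemma chi_mk_cond (r : V2 → ℕ) (k : ℕ) (u w : V2) :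
    chi r k s(u, w) = if (r u ≤ k ∧ ¬ r w ≤ k) ∨ (r w ≤ k ∧ ¬ r u ≤ k) then 1 else 0 := by
  rw [chi_mk]; unfold indf
  by_cases hu : r u ≤ k <;> by_cases hw : r w ≤ k <;> simp [hu, hw]

lemma edge_decomp (ha : Antitone a) (haK : ∀ k, K ≤ k → a k = 0)
    (r : V2 → ℕ) {u w : V2} (hne : r u ≠ r w) :
    |a (r u) - a (r w)| = ∑ k ∈ Finset.range K, (a k - a (k + 1)) * chi r k s(u, w) := by
  have hcond : ∀ k, chi r k s(u, w)
      = if (r u ≤ k ∧ ¬ r w ≤ k) ∨ (r w ≤ k ∧ ¬ r u ≤ k) then 1 else 0 := fun k =>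
    chi_mk_cond r k u w
  rcases hne.lt_or_gt with h | h
  · rw [abs_sub_decomp ha haK h]
    exact Finset.sum_congr rfl fun k _ => by rw [hcond k]
  · rw [abs_sub_comm, abs_sub_decomp ha haK h]
    refine Finset.sum_congr rfl fun k _ => ?_
    rw [hcond k]
    exact congrArg (fun x => (a k - a (k + 1)) * x) (if_congr (by tauto) rfl rfl)

lemma grad_decomp (ρ : ℕ ≃ V2) (ha : Antitone a) (haK : ∀ k, K ≤ k → a k = 0)
    (g : V2 → ℝ) (hg : ∀ v, g v = a (ρ.symm v)) :
    gradL1 ladderGraph g = ∑ k ∈ Finset.range K,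
      (a k - a (k + 1)) * ∑ e ∈ EE ((Finset.range K).image ρ), chi (fun v => ρ.symm v) k e := by
  have hS : ∀ v, g v ≠ 0 → v ∈ (Finset.range K).image ρ := by
    intro v hv
    rw [hg] at hv
    refine Finset.mem_image.mpr ⟨ρ.symm v, Finset.mem_range.mpr ?_, ρ.apply_symm_apply v⟩
    by_contra hK
    exact hv (haK _ (by omega))
  rw [gradL1_eq_sum g _ hS]
  have step : ∀ e ∈ EE ((Finset.range K).image ρ),
      Dd g e = ∑ k ∈ Finset.range K, (a k - a (k + 1)) * chi (fun v => ρ.symm v) k e := by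
    intro e he
    have hedge := edge_of_mem_EE he
    induction e using Sym2.inductionOn with
    | hf u w =>
      rw [SimpleGraph.mem_edgeSet] at hedge
      have hne : ρ.symm u ≠ ρ.symm w := fun h => hedge.ne (by
        have := congrArg ρ h; simpa using this)
      rw [Dd_mk, hg u, hg w]
      exact edge_decomp ha haK (fun v => ρ.symm v) hne
  rw [Finset.sum_congr rfl step, Finset.sum_comm]
  exact Finset.sum_congr rfl fun k _ => by rw [Finset.mul_sum]

end LPS

namespace LPS

def Cr (AF : Finset V2) (u w : V2) : Prop := u ∈ AF ∧ w ∉ AF ∧ ladderGraph.Adj u w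

lemma sne {AF : Finset V2} {u w u' w' : V2} (h1 : Cr AF u w) (h2 : Cr AF u' w')
    (h : u ≠ u' ∨ w ≠ w') : s(u, w) ≠ s(u', w') := by
  intro he
  rw [Sym2.eq_iff] at he
  rcases he with ⟨hu, hw⟩ | ⟨hu, hw⟩
  · tauto
  · exact h2.2.1 (hu ▸ h1.1)

lemma ne_snd {m n : ℕ} {i j : Fin 2} (h : i ≠ j) : ((m, i) : V2) ≠ (n, j) :=
  fun he => h (congrArg Prod.snd he)

lemma ne_fst {m n : ℕ} {i j : Fin 2} (h : m ≠ n) : ((m, i) : V2) ≠ (n, j) :=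
  fun he => h (congrArg Prod.fst he)

lemma fin01 : (0 : Fin 2) ≠ 1 := by decide

lemma adj_h (n : ℕ) (i : Fin 2) : ladderGraph.Adj (n, i) (n + 1, i) := by
  rw [ladder_adj_iff]; left; exact ⟨rfl, Or.inr rfl⟩

lemma adj_r (n : ℕ) : ladderGraph.Adj (n, 0) (n, 1) := by
  rw [ladder_adj_iff]; right; exact ⟨rfl, fin01⟩

def B0 (AF : Finset V2) : Finset ℕ := (AF.filter fun v => v.2 = 0).image Prod.fst
def B1 (AF : Finset V2) : Finset ℕ := (AF.filter fun v => v.2 = 1).image Prod.fst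

lemma mem_B0 {AF : Finset V2} {n : ℕ} : n ∈ B0 AF ↔ ((n, 0) : V2) ∈ AF := by
  constructor
  · rintro h
    obtain ⟨v, hv, hfst⟩ := Finset.mem_image.mp h
    obtain ⟨hvA, hv2⟩ := Finset.mem_filter.mp hv
    have : v = (n, 0) := Prod.ext hfst hv2
    rwa [this] at hvA
  · intro h
    exact Finset.mem_image.mpr ⟨(n, 0), Finset.mem_filter.mpr ⟨h, rfl⟩, rfl⟩

lemma mem_B1 {AF : Finset V2} {n : ℕ} : n ∈ B1 AF ↔ ((n, 1) : V2) ∈ AF := by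
  constructor
  · rintro h
    obtain ⟨v, hv, hfst⟩ := Finset.mem_image.mp h
    obtain ⟨hvA, hv2⟩ := Finset.mem_filter.mp hv
    have : v = (n, 1) := Prod.ext hfst hv2
    rwa [this] at hvA
  · intro h
    exact Finset.mem_image.mpr ⟨(n, 1), Finset.mem_filter.mpr ⟨h, rfl⟩, rfl⟩

lemma card_rows (AF : Finset V2) : AF.card = (B0 AF).card + (B1 AF).card := by
  have h0 : (B0 AF).card = (AF.filter fun v => v.2 = 0).card := by
    apply Finset.card_image_of_injOn
    intro v hv v' hv' hfst
    exact Prod.ext hfst ((Finset.mem_filter.mp hv).2.trans (Finset.mem_filter.mp hv').2.symm)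
  have h1 : (B1 AF).card = (AF.filter fun v => v.2 = 1).card := by
    apply Finset.card_image_of_injOn
    intro v hv v' hv' hfst
    exact Prod.ext hfst ((Finset.mem_filter.mp hv).2.trans (Finset.mem_filter.mp hv').2.symm)
  have hneg : (AF.filter fun v => v.2 = 1) = (AF.filter fun v => ¬ v.2 = 0) := by
    apply Finset.filter_congr
    intro v _
    have := v.2.2
    constructor
    · intro h h0; rw [h0] at h; exact fin01 h
    · intro h
      have : v.2 = 0 ∨ v.2 = 1 := by omega
      tauto
  rw [h0, h1, hneg, Finset.card_filter_add_card_filter_not]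

lemma rows_nonempty {AF : Finset V2} (h : AF.Nonempty) :
    (B0 AF).Nonempty ∨ (B1 AF).Nonempty := by
  obtain ⟨v, hv⟩ := h
  have hv2 : v.2 = 0 ∨ v.2 = 1 := by have := v.2.2; omega
  rcases hv2 with h2 | h2
  · left; exact ⟨v.1, mem_B0.mpr (by rwa [← h2, Prod.mk.eta])⟩
  · right; exact ⟨v.1, mem_B1.mpr (by rwa [← h2, Prod.mk.eta])⟩

lemma not_mem_of_gt_max0 {AF : Finset V2} (hB : (B0 AF).Nonempty) {n : ℕ}
    (h : (B0 AF).max' hB < n) : ((n, 0) : V2) ∉ AF :=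
  fun hc => absurd (Finset.le_max' _ _ (mem_B0.mpr hc)) (by omega)

lemma not_mem_of_gt_max1 {AF : Finset V2} (hB : (B1 AF).Nonempty) {n : ℕ}
    (h : (B1 AF).max' hB < n) : ((n, 1) : V2) ∉ AF :=
  fun hc => absurd (Finset.le_max' _ _ (mem_B1.mpr hc)) (by omega)

/-- Two distinct crossing edges for any nonempty finite set. -/
lemma iso2 {AF : Finset V2} (h : AF.Nonempty) :
    ∃ u₁ w₁ u₂ w₂ : V2, Cr AF u₁ w₁ ∧ Cr AF u₂ w₂ ∧ s(u₁, w₁) ≠ s(u₂, w₂) := by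
  rcases (B1 AF).eq_empty_or_nonempty with hT | hT
  · have hB : (B0 AF).Nonempty := (rows_nonempty h).resolve_right (by rw [hT]; simp)
    set b := (B0 AF).max' hB with hbdef
    have hbA : ((b, 0) : V2) ∈ AF := mem_B0.mp ((B0 AF).max'_mem hB)
    have hT' : ∀ n, ((n, 1) : V2) ∉ AF := fun n hc => by
      have := mem_B1.mpr hc; rw [hT] at this; simp at this
    have c1 : Cr AF (b, 0) (b, 1) := ⟨hbA, hT' b, adj_r b⟩
    have c2 : Cr AF (b, 0) (b + 1, 0) := ⟨hbA, not_mem_of_gt_max0 hB (by omega), adj_h b 0⟩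
    exact ⟨_, _, _, _, c1, c2, sne c1 c2 (Or.inr (ne_snd (by decide)))⟩
  · rcases (B0 AF).eq_empty_or_nonempty with hB | hB
    · set t := (B1 AF).max' hT with htdef
      have htA : ((t, 1) : V2) ∈ AF := mem_B1.mp ((B1 AF).max'_mem hT)
      have hB' : ∀ n, ((n, 0) : V2) ∉ AF := fun n hc => by
        have := mem_B0.mpr hc; rw [hB] at this; simp at this
      have c1 : Cr AF (t, 1) (t, 0) := ⟨htA, hB' t, (adj_r t).symm⟩
      have c2 : Cr AF (t, 1) (t + 1, 1) := ⟨htA, not_mem_of_gt_max1 hT (by omega), adj_h t 1⟩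
      exact ⟨_, _, _, _, c1, c2, sne c1 c2 (Or.inr (ne_snd (by decide)))⟩
    · set b := (B0 AF).max' hB
      set t := (B1 AF).max' hT
      have c1 : Cr AF (b, 0) (b + 1, 0) :=
        ⟨mem_B0.mp ((B0 AF).max'_mem hB), not_mem_of_gt_max0 hB (by omega), adj_h b 0⟩
      have c2 : Cr AF (t, 1) (t + 1, 1) :=
        ⟨mem_B1.mp ((B1 AF).max'_mem hT), not_mem_of_gt_max1 hT (by omega), adj_h t 1⟩
      exact ⟨_, _, _, _, c1, c2, sne c1 c2 (Or.inl (ne_snd (by decide)))⟩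

end LPS

namespace LPS

/-- Three distinct crossing edges when the cardinality is odd and at least 3. -/
lemma iso3 {AF : Finset V2} (h3 : 3 ≤ AF.card) (hodd : ¬ Even AF.card) :
    ∃ u₁ w₁ u₂ w₂ u₃ w₃ : V2, Cr AF u₁ w₁ ∧ Cr AF u₂ w₂ ∧ Cr AF u₃ w₃ ∧
      s(u₁, w₁) ≠ s(u₂, w₂) ∧ s(u₁, w₁) ≠ s(u₃, w₃) ∧ s(u₂, w₂) ≠ s(u₃, w₃) := by
  have hne : AF.Nonempty := Finset.card_pos.mp (by omega)
  rcases (B1 AF).eq_empty_or_nonempty with hT | hT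
  · -- top row empty: at least 3 rungs
    have hT' : ∀ n, ((n, 1) : V2) ∉ AF := fun n hc => by
      have := mem_B1.mpr hc; rw [hT] at this; simp at this
    have hcard : 3 ≤ (B0 AF).card := by
      have := card_rows AF
      rw [hT] at this; simp at this; omega
    obtain ⟨n₁, hn₁, n₂, hn₂, n₃, hn₃, h12, h13, h23⟩ :=
      Finset.two_lt_card.mp (show 2 < (B0 AF).card by omega)
    have c1 : Cr AF (n₁, 0) (n₁, 1) := ⟨mem_B0.mp hn₁, hT' n₁, adj_r n₁⟩
    have c2 : Cr AF (n₂, 0) (n₂, 1) := ⟨mem_B0.mp hn₂, hT' n₂, adj_r n₂⟩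
    have c3 : Cr AF (n₃, 0) (n₃, 1) := ⟨mem_B0.mp hn₃, hT' n₃, adj_r n₃⟩
    exact ⟨_, _, _, _, _, _, c1, c2, c3, sne c1 c2 (Or.inl (ne_fst h12)),
      sne c1 c3 (Or.inl (ne_fst h13)), sne c2 c3 (Or.inl (ne_fst h23))⟩
  rcases (B0 AF).eq_empty_or_nonempty with hB | hB
  · -- bottom row empty
    have hB' : ∀ n, ((n, 0) : V2) ∉ AF := fun n hc => by
      have := mem_B0.mpr hc; rw [hB] at this; simp at this
    have hcard : 3 ≤ (B1 AF).card := by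
      have := card_rows AF
      rw [hB] at this; simp at this; omega
    obtain ⟨n₁, hn₁, n₂, hn₂, n₃, hn₃, h12, h13, h23⟩ :=
      Finset.two_lt_card.mp (show 2 < (B1 AF).card by omega)
    have c1 : Cr AF (n₁, 1) (n₁, 0) := ⟨mem_B1.mp hn₁, hB' n₁, (adj_r n₁).symm⟩
    have c2 : Cr AF (n₂, 1) (n₂, 0) := ⟨mem_B1.mp hn₂, hB' n₂, (adj_r n₂).symm⟩
    have c3 : Cr AF (n₃, 1) (n₃, 0) := ⟨mem_B1.mp hn₃, hB' n₃, (adj_r n₃).symm⟩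
    exact ⟨_, _, _, _, _, _, c1, c2, c3, sne c1 c2 (Or.inl (ne_fst h12)),
      sne c1 c3 (Or.inl (ne_fst h13)), sne c2 c3 (Or.inl (ne_fst h23))⟩
  -- both rows nonempty
  set b := (B0 AF).max' hB with hbdef
  set t := (B1 AF).max' hT with htdef
  have hbA : ((b, 0) : V2) ∈ AF := mem_B0.mp ((B0 AF).max'_mem hB)
  have htA : ((t, 1) : V2) ∈ AF := mem_B1.mp ((B1 AF).max'_mem hT)
  have c1 : Cr AF (b, 0) (b + 1, 0) := ⟨hbA, not_mem_of_gt_max0 hB (by omega), adj_h b 0⟩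
  have c2 : Cr AF (t, 1) (t + 1, 1) := ⟨htA, not_mem_of_gt_max1 hT (by omega), adj_h t 1⟩
  rcases lt_trichotomy b t with hbt | hbt | hbt
  · -- t > b : rung at t
    have c3 : Cr AF (t, 1) (t, 0) := ⟨htA, fun hc =>
      absurd (Finset.le_max' _ _ (mem_B0.mpr hc)) (by omega), (adj_r t).symm⟩
    exact ⟨_, _, _, _, _, _, c1, c2, c3, sne c1 c2 (Or.inl (ne_snd (by decide))),
      sne c1 c3 (Or.inl (ne_snd (by decide))), sne c2 c3 (Or.inr (ne_snd (by decide)))⟩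
  · -- b = t : look for gaps
    rcases ((Finset.range b).filter fun q => q ∉ B0 AF).eq_empty_or_nonempty with hGB | hGB
    · rcases ((Finset.range t).filter fun q => q ∉ B1 AF).eq_empty_or_nonempty with hGT | hGT
      · -- no gaps: AF is a full initial block, so its cardinality is even
        exfalso
        have hB0 : B0 AF = Finset.range (b + 1) := by
          ext n
          simp only [Finset.mem_range]
          constructor
          · intro hn; have := Finset.le_max' _ _ hn; omega
          · intro hn
            rcases Nat.lt_or_ge n b with h | h
            · by_contra hc
              have : n ∈ (Finset.range b).filter fun q => q ∉ B0 AF :=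
                Finset.mem_filter.mpr ⟨Finset.mem_range.mpr h, hc⟩
              rw [hGB] at this; simp at this
            · have : n = b := by omega
              rw [this]; exact (B0 AF).max'_mem hB
        have hB1 : B1 AF = Finset.range (t + 1) := by
          ext n
          simp only [Finset.mem_range]
          constructor
          · intro hn; have := Finset.le_max' _ _ hn; omega
          · intro hn
            rcases Nat.lt_or_ge n t with h | h
            · by_contra hc
              have : n ∈ (Finset.range t).filter fun q => q ∉ B1 AF :=
                Finset.mem_filter.mpr ⟨Finset.mem_range.mpr h, hc⟩
              rw [hGT] at this; simp at this
            · have : n = t := by omega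
              rw [this]; exact (B1 AF).max'_mem hT
        apply hodd
        rw [card_rows AF, hB0, hB1, Finset.card_range, Finset.card_range, hbt]
        exact ⟨t + 1, by ring⟩
      · -- gap in the top row
        set p := ((Finset.range t).filter fun q => q ∉ B1 AF).max' hGT with hpdef
        have hp := Finset.mem_filter.mp (((Finset.range t).filter fun q => q ∉ B1 AF).max'_mem hGT)
        have hpt : p < t := Finset.mem_range.mp hp.1
        have hp1 : p + 1 ∈ B1 AF := by
          rcases Nat.lt_or_ge (p + 1) t with h | h
          · by_contra hc
            have : p + 1 ∈ (Finset.range t).filter fun q => q ∉ B1 AF :=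
              Finset.mem_filter.mpr ⟨Finset.mem_range.mpr h, hc⟩
            have := Finset.le_max' _ _ this
            omega
          · have : p + 1 = t := by omega
            rw [this]; exact (B1 AF).max'_mem hT
        have c3 : Cr AF (p + 1, 1) (p, 1) := ⟨mem_B1.mp hp1,
          fun hc => hp.2 (mem_B1.mpr hc), (adj_h p 1).symm⟩
        exact ⟨_, _, _, _, _, _, c1, c2, c3, sne c1 c2 (Or.inl (ne_snd (by decide))),
          sne c1 c3 (Or.inl (ne_snd (by decide))), sne c2 c3 (Or.inr (ne_fst (by omega)))⟩
    · -- gap in the bottom row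
      set p := ((Finset.range b).filter fun q => q ∉ B0 AF).max' hGB with hpdef
      have hp := Finset.mem_filter.mp (((Finset.range b).filter fun q => q ∉ B0 AF).max'_mem hGB)
      have hpb : p < b := Finset.mem_range.mp hp.1
      have hp1 : p + 1 ∈ B0 AF := by
        rcases Nat.lt_or_ge (p + 1) b with h | h
        · by_contra hc
          have : p + 1 ∈ (Finset.range b).filter fun q => q ∉ B0 AF :=
            Finset.mem_filter.mpr ⟨Finset.mem_range.mpr h, hc⟩
          have := Finset.le_max' _ _ this
          omega
        · have : p + 1 = b := by omega
          rw [this]; exact (B0 AF).max'_mem hB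
      have c3 : Cr AF (p + 1, 0) (p, 0) := ⟨mem_B0.mp hp1,
        fun hc => hp.2 (mem_B0.mpr hc), (adj_h p 0).symm⟩
      exact ⟨_, _, _, _, _, _, c1, c2, c3, sne c1 c2 (Or.inl (ne_snd (by decide))),
        sne c1 c3 (Or.inr (ne_fst (by omega))), sne c2 c3 (Or.inl (ne_snd (by decide)))⟩
  · -- b > t : rung at b
    have c3 : Cr AF (b, 0) (b, 1) := ⟨hbA, fun hc =>
      absurd (Finset.le_max' _ _ (mem_B1.mpr hc)) (by omega), adj_r b⟩
    exact ⟨_, _, _, _, _, _, c1, c2, c3, sne c1 c2 (Or.inl (ne_snd (by decide))),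
      sne c1 c3 (Or.inr (ne_snd (by decide))), sne c2 c3 (Or.inl (ne_snd (by decide)))⟩

/-- Two distinct vertex-boundary vertices for any nonempty finite set. -/
lemma isoV {AF : Finset V2} (h : AF.Nonempty) :
    ∃ w₁ w₂ : V2, w₁ ∉ AF ∧ w₂ ∉ AF ∧ w₁ ≠ w₂ ∧
      (∃ z₁ ∈ AF, ladderGraph.Adj z₁ w₁) ∧ (∃ z₂ ∈ AF, ladderGraph.Adj z₂ w₂) := by
  rcases (B1 AF).eq_empty_or_nonempty with hT | hT
  · have hB : (B0 AF).Nonempty := (rows_nonempty h).resolve_right (by rw [hT]; simp)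
    set b := (B0 AF).max' hB
    have hbA : ((b, 0) : V2) ∈ AF := mem_B0.mp ((B0 AF).max'_mem hB)
    have hT' : ∀ n, ((n, 1) : V2) ∉ AF := fun n hc => by
      have := mem_B1.mpr hc; rw [hT] at this; simp at this
    exact ⟨(b, 1), (b + 1, 0), hT' b, not_mem_of_gt_max0 hB (by omega),
      ne_snd (by decide), ⟨(b, 0), hbA, adj_r b⟩, ⟨(b, 0), hbA, adj_h b 0⟩⟩
  rcases (B0 AF).eq_empty_or_nonempty with hB | hB
  · set t := (B1 AF).max' hT
    have htA : ((t, 1) : V2) ∈ AF := mem_B1.mp ((B1 AF).max'_mem hT)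
    have hB' : ∀ n, ((n, 0) : V2) ∉ AF := fun n hc => by
      have := mem_B0.mpr hc; rw [hB] at this; simp at this
    exact ⟨(t, 0), (t + 1, 1), hB' t, not_mem_of_gt_max1 hT (by omega),
      ne_snd (by decide), ⟨(t, 1), htA, (adj_r t).symm⟩, ⟨(t, 1), htA, adj_h t 1⟩⟩
  · set b := (B0 AF).max' hB
    set t := (B1 AF).max' hT
    exact ⟨(b + 1, 0), (t + 1, 1), not_mem_of_gt_max0 hB (by omega),
      not_mem_of_gt_max1 hT (by omega), ne_snd (by decide),
      ⟨(b, 0), mem_B0.mp ((B0 AF).max'_mem hB), adj_h b 0⟩,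
      ⟨(t, 1), mem_B1.mp ((B1 AF).max'_mem hT), adj_h t 1⟩⟩

end LPS

namespace LPS

def bval (k : ℕ) : ℕ := if k ≠ 0 ∧ k % 2 = 0 then 3 else 2

noncomputable def Ck (k : ℕ) : Finset (Sym2 V2) :=
  if k = 0 then
    {s(((0 : ℕ), (0 : Fin 2)), ((0 : ℕ), (1 : Fin 2))),
     s(((0 : ℕ), (0 : Fin 2)), ((1 : ℕ), (0 : Fin 2)))}
  else if k % 2 = 0 then
    {s((k / 2, (0 : Fin 2)), (k / 2, (1 : Fin 2))),
     s((k / 2, (0 : Fin 2)), (k / 2 + 1, (0 : Fin 2))),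
     s((k / 2 - 1, (1 : Fin 2)), (k / 2, (1 : Fin 2)))}
  else
    {s((k / 2, (0 : Fin 2)), (k / 2 + 1, (0 : Fin 2))),
     s((k / 2, (1 : Fin 2)), (k / 2 + 1, (1 : Fin 2)))}

lemma card_Ck_le (k : ℕ) : (Ck k).card ≤ bval k := by
  unfold Ck bval
  by_cases h0 : k = 0
  · rw [if_pos h0, if_neg (by tauto)]
    exact le_trans (Finset.card_insert_le _ _) (by simp)
  · rw [if_neg h0]
    by_cases h2 : k % 2 = 0
    · rw [if_pos h2, if_pos ⟨h0, h2⟩]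
      exact le_trans (Finset.card_insert_le _ _)
        (Nat.succ_le_succ (le_trans (Finset.card_insert_le _ _) (by simp)))
    · rw [if_neg h2, if_neg (by tauto)]
      exact le_trans (Finset.card_insert_le _ _) (by simp)

lemma chi_le_one (r : V2 → ℕ) (k : ℕ) (e : Sym2 V2) : chi r k e ≤ 1 := by
  induction e using Sym2.inductionOn with
  | hf u w =>
    rw [chi_mk_cond]
    split <;> norm_num

lemma chi_ne_zero_cond {r : V2 → ℕ} {u w : V2} {k : ℕ} (h : chi r k s(u, w) ≠ 0) :
    (r u ≤ k ∧ ¬ r w ≤ k) ∨ (r w ≤ k ∧ ¬ r u ≤ k) := by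
  rw [chi_mk_cond] at h
  by_contra hc
  rw [if_neg hc] at h
  exact h rfl

lemma cross_mem_Ck (k : ℕ) {e : Sym2 V2} (he : e ∈ ladderGraph.edgeSet)
    (hchi : chi (fun v => lexE.symm v) k e ≠ 0) : e ∈ Ck k := by
  induction e using Sym2.inductionOn with
  | hf u w =>
    obtain ⟨p, i⟩ := u
    obtain ⟨q, j⟩ := w
    rw [SimpleGraph.mem_edgeSet, ladder_adj_iff] at he
    have hc : (2 * p + (i : ℕ) ≤ k ∧ ¬ 2 * q + (j : ℕ) ≤ k) ∨
        (2 * q + (j : ℕ) ≤ k ∧ ¬ 2 * p + (i : ℕ) ≤ k) := chi_ne_zero_cond hchi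
    have hi : i = 0 ∨ i = 1 := by omega
    have hj : j = 0 ∨ j = 1 := by omega
    simp only [Prod.mk.injEq] at he
    unfold Ck
    rcases he with ⟨hij, hpq | hpq⟩ | ⟨hpq, hij⟩
    · -- p = q + 1, i = j : swap and treat as horizontal q → q+1
      rw [show ((p, i) : V2) = (q + 1, j) by rw [hij, hpq]]
      rw [Sym2.eq_swap]
      subst hpq hij
      rcases hi with h | h <;> subst h <;> simp only [Fin.val_zero, Fin.val_one] at hc
      · -- bottom row
        have hk : k = 2 * q ∨ k = 2 * q + 1 := by omega
        rcases hk with hk | hk <;> subst hk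
        · by_cases h0 : q = 0
          · subst h0; simp
          · rw [if_neg (by omega), if_pos (by omega)]
            have : 2 * q / 2 = q := by omega
            rw [this]
            simp
        · rw [if_neg (by omega), if_neg (by omega)]
          have : (2 * q + 1) / 2 = q := by omega
          rw [this]
          simp
      · -- top row
        have hk : k = 2 * q + 1 ∨ k = 2 * q + 2 := by omega
        rcases hk with hk | hk <;> subst hk
        · rw [if_neg (by omega), if_neg (by omega)]
          have : (2 * q + 1) / 2 = q := by omega
          rw [this]
          simp
        · rw [if_neg (by omega), if_pos (by omega)]
          have h1 : (2 * q + 2) / 2 = q + 1 := by omega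
          rw [h1]
          have h2 : q + 1 - 1 = q := by omega
          rw [h2]
          simp
    · -- q = p + 1, i = j
      rw [show ((q, j) : V2) = (p + 1, i) by rw [← hij, hpq]]
      subst hpq
      rcases hi with h | h <;> subst h <;> rw [← hij] at hc <;>
        simp only [Fin.val_zero, Fin.val_one] at hc
      · have hk : k = 2 * p ∨ k = 2 * p + 1 := by omega
        rcases hk with hk | hk <;> subst hk
        · by_cases h0 : p = 0
          · subst h0; simp
          · rw [if_neg (by omega), if_pos (by omega)]
            have : 2 * p / 2 = p := by omega
            rw [this]
            simp
        · rw [if_neg (by omega), if_neg (by omega)]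
          have : (2 * p + 1) / 2 = p := by omega
          rw [this]
          simp
      · have hk : k = 2 * p + 1 ∨ k = 2 * p + 2 := by omega
        rcases hk with hk | hk <;> subst hk
        · rw [if_neg (by omega), if_neg (by omega)]
          have : (2 * p + 1) / 2 = p := by omega
          rw [this]
          simp
        · rw [if_neg (by omega), if_pos (by omega)]
          have h1 : (2 * p + 2) / 2 = p + 1 := by omega
          rw [h1]
          have h2 : p + 1 - 1 = p := by omega
          rw [h2]
          simp
    · -- rung : p = q
      subst hpq
      have hij' : ((i : ℕ) = 0 ∧ (j : ℕ) = 1) ∨ ((i : ℕ) = 1 ∧ (j : ℕ) = 0) := by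
        rcases hi with h | h <;> rcases hj with h' | h' <;> subst h h' <;> simp at hij ⊢
      rcases hij' with ⟨h1, h2⟩ | ⟨h1, h2⟩
      · have hi0 : i = 0 := by omega
        have hj1 : j = 1 := by omega
        subst hi0 hj1
        simp only [Fin.val_zero, Fin.val_one] at hc
        have hk : k = 2 * p := by omega
        subst hk
        by_cases h0 : p = 0
        · subst h0; simp
        · rw [if_neg (by omega), if_pos (by omega)]
          have : 2 * p / 2 = p := by omega
          rw [this]
          simp
      · have hi1 : i = 1 := by omega
        have hj0 : j = 0 := by omega
        subst hi1 hj0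
        rw [Sym2.eq_swap]
        simp only [Fin.val_zero, Fin.val_one] at hc
        have hk : k = 2 * p := by omega
        subst hk
        by_cases h0 : p = 0
        · subst h0; simp
        · rw [if_neg (by omega), if_pos (by omega)]
          have : 2 * p / 2 = p := by omega
          rw [this]
          simp

end LPS

namespace LPS

lemma count_upper (S : Finset V2) (k : ℕ) :
    ∑ e ∈ EE S, chi (fun v => lexE.symm v) k e ≤ (bval k : ℝ) := by
  classical
  have h1 : ∀ e ∈ EE S, chi (fun v => lexE.symm v) k e ≤ (if e ∈ Ck k then (1 : ℝ) else 0) := by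
    intro e he
    by_cases hz : chi (fun v => lexE.symm v) k e = 0
    · rw [hz]; split <;> norm_num
    · rw [if_pos (cross_mem_Ck k (edge_of_mem_EE he) hz)]
      exact chi_le_one _ k e
  calc ∑ e ∈ EE S, chi (fun v => lexE.symm v) k e
      ≤ ∑ e ∈ EE S, (if e ∈ Ck k then (1 : ℝ) else 0) := Finset.sum_le_sum h1
    _ = (((EE S).filter fun e => e ∈ Ck k).card : ℝ) := by rw [Finset.sum_boole]
    _ ≤ ((Ck k).card : ℝ) := by
        have : ((EE S).filter fun e => e ∈ Ck k) ⊆ Ck k := fun e he =>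
          (Finset.mem_filter.mp he).2
        exact_mod_cast Finset.card_le_card this
    _ ≤ (bval k : ℝ) := by exact_mod_cast card_Ck_le k

def AFk (ρ : ℕ ≃ V2) (k : ℕ) : Finset V2 := (Finset.range (k + 1)).image ρ

lemma mem_AFk {ρ : ℕ ≃ V2} {k : ℕ} {v : V2} : v ∈ AFk ρ k ↔ ρ.symm v ≤ k := by
  constructor
  · rintro h
    obtain ⟨j, hj, rfl⟩ := Finset.mem_image.mp h
    rw [Equiv.symm_apply_apply]
    exact Nat.lt_succ_iff.mp (Finset.mem_range.mp hj)
  · intro h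
    exact Finset.mem_image.mpr ⟨ρ.symm v, Finset.mem_range.mpr (by omega), ρ.apply_symm_apply v⟩

lemma AFk_subset {ρ : ℕ ≃ V2} {k K : ℕ} (hk : k < K) :
    AFk ρ k ⊆ (Finset.range K).image ρ :=
  Finset.image_subset_image (by intro x hx; rw [Finset.mem_range] at *; omega)

lemma AFk_nonempty (ρ : ℕ ≃ V2) (k : ℕ) : (AFk ρ k).Nonempty :=
  ⟨ρ 0, Finset.mem_image.mpr ⟨0, Finset.mem_range.mpr (by omega), rfl⟩⟩

lemma card_AFk (ρ : ℕ ≃ V2) (k : ℕ) : (AFk ρ k).card = k + 1 := by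
  rw [AFk, Finset.card_image_of_injective _ ρ.injective, Finset.card_range]

lemma cr_chi_one {ρ : ℕ ≃ V2} {k : ℕ} {u w : V2} (h : Cr (AFk ρ k) u w) :
    chi (fun v => ρ.symm v) k s(u, w) = 1 :=
  chi_eq_one _ k (mem_AFk.mp h.1) (fun hc => h.2.1 (mem_AFk.mpr hc))

lemma cr_mem_EE {ρ : ℕ ≃ V2} {k K : ℕ} (hk : k < K) {u w : V2} (h : Cr (AFk ρ k) u w) :
    s(u, w) ∈ EE ((Finset.range K).image ρ) :=
  mem_EE_of h.2.2 (AFk_subset hk h.1)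

lemma count_lower2 (ρ : ℕ ≃ V2) {K k : ℕ} (hk : k < K) :
    (2 : ℝ) ≤ ∑ e ∈ EE ((Finset.range K).image ρ), chi (fun v => ρ.symm v) k e := by
  classical
  obtain ⟨u₁, w₁, u₂, w₂, c1, c2, hne⟩ := iso2 (AFk_nonempty ρ k)
  have hsum : ∑ e ∈ ({s(u₁, w₁), s(u₂, w₂)} : Finset (Sym2 V2)),
      chi (fun v => ρ.symm v) k e = 2 := by
    rw [Finset.sum_insert (by simpa using hne), Finset.sum_singleton,
      cr_chi_one c1, cr_chi_one c2]
    norm_num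
  rw [← hsum]
  refine Finset.sum_le_sum_of_subset_of_nonneg ?_ (fun e _ _ => chi_nonneg _ k e)
  intro e he
  rcases Finset.mem_insert.mp he with rfl | he
  · exact cr_mem_EE hk c1
  · rw [Finset.mem_singleton.mp he]
    exact cr_mem_EE hk c2

lemma count_lower3 (ρ : ℕ ≃ V2) {K k : ℕ} (hk : k < K) (h0 : k ≠ 0) (h2 : k % 2 = 0) :
    (3 : ℝ) ≤ ∑ e ∈ EE ((Finset.range K).image ρ), chi (fun v => ρ.symm v) k e := by
  classical
  have hcard : 3 ≤ (AFk ρ k).card := by rw [card_AFk]; omega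
  have hodd : ¬ Even (AFk ρ k).card := by
    rw [card_AFk]
    rcases Nat.even_or_odd (k + 1) with h | h
    · exfalso; rcases h with ⟨c, hc⟩; omega
    · intro hc; rcases hc with ⟨c, hc⟩; rcases h with ⟨c', hc'⟩; omega
  obtain ⟨u₁, w₁, u₂, w₂, u₃, w₃, c1, c2, c3, h12, h13, h23⟩ := iso3 hcard hodd
  have hsum : ∑ e ∈ ({s(u₁, w₁), s(u₂, w₂), s(u₃, w₃)} : Finset (Sym2 V2)),
      chi (fun v => ρ.symm v) k e = 3 := by
    rw [Finset.sum_insert (by simp only [Finset.mem_insert, Finset.mem_singleton]; tauto),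
      Finset.sum_insert (by simpa using h23), Finset.sum_singleton,
      cr_chi_one c1, cr_chi_one c2, cr_chi_one c3]
    norm_num
  rw [← hsum]
  refine Finset.sum_le_sum_of_subset_of_nonneg ?_ (fun e _ _ => chi_nonneg _ k e)
  intro e he
  rcases Finset.mem_insert.mp he with rfl | he
  · exact cr_mem_EE hk c1
  rcases Finset.mem_insert.mp he with rfl | he
  · exact cr_mem_EE hk c2
  · rw [Finset.mem_singleton.mp he]
    exact cr_mem_EE hk c3

lemma count_compare (ρ : ℕ ≃ V2) {K k : ℕ} (hk : k < K) (S : Finset V2) :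
    ∑ e ∈ EE S, chi (fun v => lexE.symm v) k e ≤
      ∑ e ∈ EE ((Finset.range K).image ρ), chi (fun v => ρ.symm v) k e := by
  refine le_trans (count_upper S k) ?_
  unfold bval
  by_cases h : k ≠ 0 ∧ k % 2 = 0
  · rw [if_pos h]
    exact_mod_cast count_lower3 ρ hk h.1 h.2
  · rw [if_neg h]
    exact_mod_cast count_lower2 ρ hk

end LPS

namespace LPS

lemma gradLinf_eq_iSup (g : V2 → ℝ) :
    gradLinf ladderGraph g = ⨆ e : ladderGraph.edgeSet, Dd g e.1 := rfl

instance : Nonempty ↥ladderGraph.edgeSet :=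
  ⟨⟨s(((0 : ℕ), (0 : Fin 2)), ((0 : ℕ), (1 : Fin 2))), adj_r 0⟩⟩

lemma lex_rank_close {u w : V2} (h : ladderGraph.Adj u w) :
    lexE.symm u ≠ lexE.symm w ∧ lexE.symm u ≤ lexE.symm w + 2 ∧
      lexE.symm w ≤ lexE.symm u + 2 := by
  obtain ⟨p, i⟩ := u
  obtain ⟨q, j⟩ := w
  rw [ladder_adj_iff] at h
  simp only [Prod.mk.injEq] at h
  have : (lexE.symm ((p, i) : V2) : ℕ) = 2 * p + i.1 := rfl
  rw [this]
  have : (lexE.symm ((q, j) : V2) : ℕ) = 2 * q + j.1 := rfl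
  rw [this]
  have hi := i.2
  have hj := j.2
  have hij : i = j ↔ i.1 = j.1 := Fin.ext_iff
  rcases h with ⟨h1, h2⟩ | ⟨h1, h2⟩ <;> rw [hij] at * <;> omega

end LPS

end PolyaSzegoAux

open LPS

/-- On the ladder graph, the lexicographic rearrangement of a finitely
supported `f : ℕ×{0,1} → ℝ_{≥0}` satisfies `‖∇f*‖_{L¹} ≤ ‖∇f‖_{L¹}` and
`‖∇f*‖_{L^∞} ≤ ‖∇f‖_{L^∞}`. -/
theorem lex_polya_szego (f fstar : ℕ × Fin 2 → ℝ)
    (hsupp : (Function.support f).Finite) (hpos : ∀ x, 0 ≤ f x)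
    (hre : IsRearrangement lexEnum f fstar) :
    gradL1 ladderGraph fstar ≤ gradL1 ladderGraph f ∧
      gradLinf ladderGraph fstar ≤ gradLinf ladderGraph f := by
  obtain ⟨⟨σ, hσ⟩, hmono⟩ := hre
  set a : ℕ → ℝ := fun k => fstar (lexEnum k) with hadef
  have ha : Antitone a := fun m n h => hmono m n h
  have hfs_eq : ∀ v, fstar v = f (σ v) := fun v => by rw [hσ]; rfl
  have ha0 : ∀ k, 0 ≤ a k := fun k => by show 0 ≤ fstar (lexEnum k); rw [hfs_eq]; exact hpos _
  have hfin : {k : ℕ | a k ≠ 0}.Finite := by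
    have hsub : {k : ℕ | a k ≠ 0} ⊆ (fun k => σ (lexEnum k)) ⁻¹' (Function.support f) := by
      intro k hk
      simp only [Set.mem_preimage, Function.mem_support]
      rw [← hfs_eq]
      exact hk
    have hinj : Function.Injective (fun k => σ (lexEnum k)) :=
      σ.injective.comp lexE.injective
    exact Set.Finite.subset (Set.Finite.preimage hinj.injOn hsupp) hsub
  obtain ⟨K₀, hK₀⟩ := hfin.bddAbove
  set K : ℕ := K₀ + 1 with hKdef
  have haK : ∀ k, K ≤ k → a k = 0 := by
    intro k hk
    by_contra h
    have := hK₀ (Set.mem_setOf.mpr h)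
    omega
  set τE : ℕ ≃ V2 := lexE.trans σ with hτdef
  have hτ_apply : ∀ k, τE k = σ (lexEnum k) := fun k => rfl
  have hf : ∀ v, f v = a (τE.symm v) := by
    intro v
    conv_lhs => rw [← τE.apply_symm_apply v]
    rw [hτ_apply, ← hfs_eq]
  have hfst : ∀ v, fstar v = a (lexE.symm v) := by
    intro v
    conv_lhs => rw [← lexE.apply_symm_apply v]
    rfl
  constructor
  · -- L¹ inequality
    rw [grad_decomp lexE ha haK fstar hfst, grad_decomp τE ha haK f hf]
    refine Finset.sum_le_sum fun k hk => ?_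
    have hd : 0 ≤ a k - a (k + 1) := sub_nonneg.mpr (ha (Nat.le_succ k))
    exact mul_le_mul_of_nonneg_left (count_compare τE (Finset.mem_range.mp hk) _) hd
  · -- L^∞ inequality
    have hub : ∀ e : ladderGraph.edgeSet, Dd f e.1 ≤ a 0 := by
      rintro ⟨es, he⟩
      induction es using Sym2.inductionOn with
      | hf u w =>
        rw [Dd_mk, abs_sub_le_iff]
        have h1 : f u ≤ a 0 := by rw [hf]; exact ha (Nat.zero_le _)
        have h2 : f w ≤ a 0 := by rw [hf]; exact ha (Nat.zero_le _)
        have h3 := hpos u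
        have h4 := hpos w
        constructor <;> linarith
    have hbdd : BddAbove (Set.range fun e : ↥ladderGraph.edgeSet => Dd f e.1) := by
      refine ⟨a 0, ?_⟩
      rintro x ⟨e, rfl⟩
      exact hub e
    have key : ∀ k, a k - a (k + 2) ≤ gradLinf ladderGraph f := by
      intro k
      obtain ⟨w₁, w₂, hw₁, hw₂, hww, ⟨z₁, hz₁, hzadj₁⟩, ⟨z₂, hz₂, hzadj₂⟩⟩ :=
        isoV (AFk_nonempty τE k)
      have hr₁ : k + 1 ≤ τE.symm w₁ := by
        by_contra h
        exact hw₁ (mem_AFk.mpr (by omega))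
      have hr₂ : k + 1 ≤ τE.symm w₂ := by
        by_contra h
        exact hw₂ (mem_AFk.mpr (by omega))
      have hrne : (τE.symm w₁ : ℕ) ≠ τE.symm w₂ := fun h => hww (τE.symm.injective h)
      have hex : ∃ w z, z ∈ AFk τE k ∧ ladderGraph.Adj z w ∧ k + 2 ≤ τE.symm w := by
        rcases le_or_gt (k + 2) (τE.symm w₁) with h | h
        · exact ⟨w₁, z₁, hz₁, hzadj₁, h⟩
        · exact ⟨w₂, z₂, hz₂, hzadj₂, by omega⟩
      obtain ⟨w, z, hz, hadj, hw⟩ := hex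
      have h1 : a k ≤ f z := by rw [hf]; exact ha (mem_AFk.mp hz)
      have h2 : f w ≤ a (k + 2) := by rw [hf]; exact ha hw
      have hstep : a k - a (k + 2) ≤ Dd f s(z, w) := by
        rw [Dd_mk]
        exact le_trans (by linarith) (le_abs_self _)
      exact le_trans hstep (le_ciSup hbdd (⟨s(z, w), hadj⟩ : ↥ladderGraph.edgeSet))
    rw [gradLinf_eq_iSup fstar]
    refine ciSup_le ?_
    rintro ⟨es, he⟩
    induction es using Sym2.inductionOn with
    | hf u w =>
      rw [SimpleGraph.mem_edgeSet] at he
      obtain ⟨hne, hle1, hle2⟩ := lex_rank_close he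
      show Dd fstar s(u, w) ≤ _
      rw [Dd_mk, hfst u, hfst w]
      rcases le_total (lexE.symm u : ℕ) (lexE.symm w : ℕ) with h | h
      · have hj2 : a ((lexE.symm u : ℕ) + 2) ≤ a (lexE.symm w) := ha hle2
        have hmon : a (lexE.symm w) ≤ a (lexE.symm u) := ha h
        rw [abs_of_nonneg (by linarith)]
        have := key (lexE.symm u)
        linarith
      · have hj2 : a ((lexE.symm w : ℕ) + 2) ≤ a (lexE.symm u) := ha hle1
        have hmon : a (lexE.symm u) ≤ a (lexE.symm w) := ha h
        rw [abs_of_nonpos (by linarith)]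
        have := key (lexE.symm w)
        linarith
end
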